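/- arXiv:2003.08677 — 7 statements merged into one kernel-verified Lean document; each statement's English description precedes it below -/
import Mathlib

section
/- Let α > 0 and g(t) = (1 + α t²) e^{α t²/2} for t ≥ 0, with iterated antiderivatives g₁(t) = ∫₀ᵗ g, g₂(t) = ∫₀ᵗ g₁, g₃(t) = ∫₀ᵗ g₂. Then for every t ≥ 0: g₁(t) ≤ g(t)/(2√α), t g₁(t) ≤ g(t)/α, g₂(t) ≤ g(t)/α, t g₂(t) ≤ g(t)/(2 α^{3/2}), t² g₂(t) ≤ g(t)/α², g₃(t) ≤ g(t)/α^{3/2}, and t² g₃(t) ≤ (2/3) g(t)/α^{5/2}. -/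
open Real

lemma aux_exp98 : Real.exp (9/8) < 16/3 := by
  by_contra h
  push_neg at h
  have h8 : (16/3:ℝ)^8 ≤ Real.exp (9/8) ^ 8 := pow_le_pow_left₀ (by norm_num) h 8
  have he : Real.exp (9/8) ^ 8 = Real.exp 9 := by
    rw [← Real.exp_nat_mul]; norm_num
  have h9 : Real.exp 9 = Real.exp 1 ^ 9 := by
    rw [← Real.exp_nat_mul]; norm_num
  have := Real.exp_one_lt_d9
  have h2 : Real.exp 1 ^ 9 < 2.7182818286 ^ 9 :=
    pow_lt_pow_left₀ this (Real.exp_pos 1).le (by norm_num)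
  rw [he, h9] at h8
  nlinarith

lemma aux_P (x : ℝ) (hx : 0 ≤ x) : Real.exp (x^2/2) - 1 ≤ x * Real.exp (x^2/2) := by
  set u := x^2/2 with hu
  have hE : 0 < Real.exp u := Real.exp_pos u
  rcases le_or_gt x 2 with h | h
  · have h1 : 1 - u ≤ Real.exp (-u) := by linarith [Real.add_one_le_exp (-u)]
    have h2 : Real.exp (-u) * Real.exp u = 1 := by
      rw [← Real.exp_add]; simp
    have h3 : (1 - u) * Real.exp u ≤ 1 := by nlinarith
    have h4 : u ≤ x := by rw [hu]; nlinarith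
    nlinarith
  · nlinarith [Real.exp_pos u]

lemma aux_K (x : ℝ) (hx : 0 ≤ x) :
    x * Real.exp (x^2/2) ≤ 2 + (2/3) * x^2 * Real.exp (x^2/2) := by
  set E := Real.exp (x^2/2) with hE
  have hEpos : 0 < E := Real.exp_pos _
  have hE1 : 1 ≤ E := Real.one_le_exp (by positivity)
  rcases le_or_gt (3/2) x with h | h
  · nlinarith [mul_nonneg (mul_nonneg hx (by linarith : (0:ℝ) ≤ 2*x/3 - 1)) hEpos.le]
  · have hEle : E < 16/3 := by
      have : x^2/2 ≤ 9/8 := by nlinarith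
      calc E ≤ Real.exp (9/8) := Real.exp_le_exp.mpr this
        _ < 16/3 := aux_exp98
    have hc : x - (2/3)*x^2 ≤ 3/8 := by nlinarith [sq_nonneg (x - 3/4)]
    nlinarith [mul_nonneg (sub_nonneg.mpr hc) (sub_nonneg.mpr hE1)]

/-- for α > 0, g(t) = (1 + α t²) e^{α t²/2} and its iterated antiderivatives
g₁, g₂, g₃ (vanishing at 0), for every t ≥ 0:
g₁(t) ≤ g(t)/(2√α), t g₁(t) ≤ g(t)/α, g₂(t) ≤ g(t)/α, t g₂(t) ≤ g(t)/(2 α^{3/2}),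
t² g₂(t) ≤ g(t)/α², g₃(t) ≤ g(t)/α^{3/2}, and t² g₃(t) ≤ (2/3) g(t)/α^{5/2}. -/
theorem sup_bounds_of_gaussian_weight
    (α : ℝ) (hα : 0 < α)
    (g g1 g2 g3 : ℝ → ℝ)
    (hg : ∀ t, g t = (1 + α * t ^ 2) * Real.exp (α * t ^ 2 / 2))
    (hg1 : ∀ t, g1 t = ∫ s in (0:ℝ)..t, g s)
    (hg2 : ∀ t, g2 t = ∫ s in (0:ℝ)..t, g1 s)
    (hg3 : ∀ t, g3 t = ∫ s in (0:ℝ)..t, g2 s) :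
    ∀ t : ℝ, 0 ≤ t →
      g1 t ≤ g t / (2 * Real.sqrt α) ∧
      t * g1 t ≤ g t / α ∧
      g2 t ≤ g t / α ∧
      t * g2 t ≤ g t / (2 * α * Real.sqrt α) ∧
      t ^ 2 * g2 t ≤ g t / α ^ 2 ∧
      g3 t ≤ g t / (α * Real.sqrt α) ∧
      t ^ 2 * g3 t ≤ (2 / 3) * g t / (α ^ 2 * Real.sqrt α) := by
  set a := Real.sqrt α with ha_def
  have ha : 0 < a := Real.sqrt_pos.mpr hα
  have ha2 : a^2 = α := Real.sq_sqrt hα.le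
  -- derivative of exp(α u^2/2)
  have hEd : ∀ s : ℝ, HasDerivAt (fun u : ℝ => Real.exp (α*u^2/2))
      (α * s * Real.exp (α*s^2/2)) s := by
    intro s
    have h1 : HasDerivAt (fun u : ℝ => α*u^2/2) (α*s) s := by
      have := ((hasDerivAt_pow 2 s).const_mul α).div_const 2
      refine this.congr_deriv ?_
      ring
    have := h1.exp
    convert this using 1
    ring
  have hexpc : Continuous fun t : ℝ => Real.exp (α*t^2/2) :=
    Real.continuous_exp.comp (by fun_prop)
  -- continuity of g
  have hgc : Continuous g := by
    have : g = fun t => (1 + α * t ^ 2) * Real.exp (α * t ^ 2 / 2) := funext hg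
    rw [this]
    exact (continuous_const.add ((continuous_const.mul (continuous_pow 2)))).mul
      (Real.continuous_exp.comp (by fun_prop))
  -- g1 closed form
  have hG1d : ∀ s : ℝ, HasDerivAt (fun u : ℝ => u * Real.exp (α*u^2/2)) (g s) s := by
    intro s
    have := (hasDerivAt_id s).mul (hEd s)
    refine this.congr_deriv ?_
    rw [hg]; simp only [id_eq]; ring
  have hg1c : ∀ t : ℝ, g1 t = t * Real.exp (α*t^2/2) := by
    intro t
    rw [hg1]
    rw [intervalIntegral.integral_eq_sub_of_hasDerivAt (fun s _ => hG1d s)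
      (hgc.intervalIntegrable 0 t)]
    simp
  have hg1cont : Continuous g1 := by
    have : g1 = fun t => t * Real.exp (α*t^2/2) := funext hg1c
    rw [this]; exact continuous_id.mul hexpc
  -- g2 closed form
  have hG2d : ∀ s : ℝ, HasDerivAt (fun u : ℝ => (Real.exp (α*u^2/2) - 1)/α) (g1 s) s := by
    intro s
    have := ((hEd s).sub_const 1).div_const α
    refine this.congr_deriv ?_
    rw [hg1c]
    field_simp
  have hg2c : ∀ t : ℝ, g2 t = (Real.exp (α*t^2/2) - 1)/α := by
    intro t
    rw [hg2]
    rw [intervalIntegral.integral_eq_sub_of_hasDerivAt (fun s _ => hG2d s)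
      (hg1cont.intervalIntegrable 0 t)]
    simp
  have hg2cont : Continuous g2 := by
    have : g2 = fun t => (Real.exp (α*t^2/2) - 1)/α := funext hg2c
    rw [this]; exact (hexpc.sub continuous_const).div_const α
  -- g3 derivative via FTC
  have hg3d : ∀ s : ℝ, HasDerivAt g3 (g2 s) s := by
    intro s
    have heq : g3 = fun u => ∫ x in (0:ℝ)..u, g2 x := funext hg3
    rw [heq]
    exact intervalIntegral.integral_hasDerivAt_right (hg2cont.intervalIntegrable 0 s)
      (hg2cont.stronglyMeasurableAtFilter _ _) hg2cont.continuousAt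
  have hg3cont : Continuous g3 := by
    have : Differentiable ℝ g3 := fun s => (hg3d s).differentiableAt
    exact this.continuous
  -- key rewriting : α s^2/2 = (a s)^2/2
  have hax : ∀ s : ℝ, α * s^2/2 = (a*s)^2/2 := by
    intro s; rw [mul_pow, ha2]
  -- bound 6 core: g3 s ≤ (E_s - 1)/(α*a) for s ≥ 0
  have hg3bd : ∀ s : ℝ, 0 ≤ s → g3 s ≤ (Real.exp (α*s^2/2) - 1)/(α*a) := by
    intro s hs
    have hmono : g3 s ≤ ∫ u in (0:ℝ)..s, u * Real.exp (α*u^2/2) / a := by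
      rw [hg3]
      apply intervalIntegral.integral_mono_on hs (hg2cont.intervalIntegrable 0 s)
        (((continuous_id.mul hexpc).div_const a).intervalIntegrable 0 s)
      intro u hu
      rw [hg2c]
      have hP := aux_P (a*u) (mul_nonneg ha.le hu.1)
      rw [← hax u] at hP
      rw [div_le_div_iff₀ hα (by positivity)]
      have h := mul_le_mul_of_nonneg_right hP ha.le
      calc (Real.exp (α*u^2/2) - 1) * a ≤ a*u*Real.exp (α*u^2/2)*a := h
        _ = u * Real.exp (α*u^2/2) * α := by rw [← ha2]; ring
    have hcalc : (∫ u in (0:ℝ)..s, u * Real.exp (α*u^2/2) / a)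
        = (Real.exp (α*s^2/2) - 1)/(α*a) := by
      have hFd : ∀ u : ℝ, HasDerivAt (fun v : ℝ => (Real.exp (α*v^2/2) - 1)/(α*a))
          (u * Real.exp (α*u^2/2) / a) u := by
        intro u
        have := ((hEd u).sub_const 1).div_const (α*a)
        refine this.congr_deriv ?_
        rw [← ha2]
        field_simp
      rw [intervalIntegral.integral_eq_sub_of_hasDerivAt (fun u _ => hFd u)
        (((continuous_id.mul hexpc).div_const a).intervalIntegrable 0 s)]
      simp
    linarith [hmono, hcalc.le, hcalc.ge]
  intro t ht
  set E := Real.exp (α*t^2/2) with hEdef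
  have hEpos : 0 < E := Real.exp_pos _
  have hE1 : 1 ≤ E := Real.one_le_exp (by positivity)
  have hgt : g t = (1 + α * t ^ 2) * E := by rw [hg]
  have hg1t : g1 t = t * E := hg1c t
  have hg2t : g2 t = (E - 1)/α := hg2c t
  have hamg : 2*a*t ≤ 1 + α*t^2 := by nlinarith [sq_nonneg (a*t - 1)]
  refine ⟨?_, ?_, ?_, ?_, ?_, ?_, ?_⟩
  · -- g1 t ≤ g t / (2a)
    rw [hg1t, hgt, le_div_iff₀ (by positivity)]
    nlinarith
  · -- t g1 t ≤ g t / α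
    rw [hg1t, hgt, le_div_iff₀ hα]
    nlinarith
  · -- g2 t ≤ g t / α
    rw [hg2t, hgt, div_le_div_iff₀ hα hα]
    nlinarith [mul_nonneg (mul_nonneg (mul_nonneg hα.le hα.le) (sq_nonneg t)) hEpos.le]
  · -- t g2 t ≤ g t / (2 α a)
    rw [hg2t, hgt, le_div_iff₀ (by positivity)]
    have h1 : t * ((E-1)/α) * (2*α*a) = 2*a*t*(E-1) := by field_simp
    rw [h1]
    nlinarith [mul_le_mul_of_nonneg_right hamg (by linarith : (0:ℝ) ≤ E - 1)]
  · -- t^2 g2 t ≤ g t / α^2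
    rw [hg2t, hgt, le_div_iff₀ (by positivity)]
    have h1 : t^2 * ((E-1)/α) * α^2 = α*t^2*(E-1) := by field_simp
    rw [h1]
    nlinarith
  · -- g3 t ≤ g t / (α a)
    rw [hgt]
    calc g3 t ≤ (E - 1)/(α*a) := hg3bd t ht
      _ ≤ (1 + α*t^2)*E/(α*a) := by
        apply div_le_div_of_nonneg_right ?_ (by positivity)
        nlinarith [mul_nonneg (mul_nonneg hα.le (sq_nonneg t)) hEpos.le]
  · -- t^2 g3 t ≤ (2/3) g t / (α^2 a)
    -- derivative of s^2 * g3 s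
    have hΦd : ∀ s : ℝ, HasDerivAt (fun u : ℝ => u^2 * g3 u)
        (2*s*g3 s + s^2*g2 s) s := by
      intro s
      have := (hasDerivAt_pow 2 s).mul (hg3d s)
      refine this.congr_deriv ?_
      ring
    -- derivative of (2/(3 α^2 a)) * g s
    have hΨd : ∀ s : ℝ, HasDerivAt (fun u : ℝ => (2/(3*α^2*a)) * g u)
        ((2/(3*α^2*a)) * (α*s*(3 + α*s^2)*Real.exp (α*s^2/2))) s := by
      intro s
      have hgd : HasDerivAt g (α*s*(3 + α*s^2)*Real.exp (α*s^2/2)) s := by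
        have heq : g = fun u => (1 + α * u ^ 2) * Real.exp (α * u ^ 2 / 2) := funext hg
        rw [heq]
        have h1 : HasDerivAt (fun u : ℝ => 1 + α * u^2) (α*(2*s)) s := by
          have := ((hasDerivAt_pow 2 s).const_mul α).const_add 1
          refine this.congr_deriv ?_
          ring
        have := h1.mul (hEd s)
        refine this.congr_deriv ?_
        ring
      exact hgd.const_mul _
    have hLc : Continuous fun s : ℝ => 2*s*g3 s + s^2*g2 s := by
      exact ((continuous_const.mul continuous_id).mul hg3cont).add
        ((continuous_pow 2).mul hg2cont)
    have hRc : Continuous fun s : ℝ => (2/(3*α^2*a)) * (α*s*(3 + α*s^2)*Real.exp (α*s^2/2)) := by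
      apply continuous_const.mul
      apply Continuous.mul ?_ hexpc
      fun_prop
    have hg30 : g3 0 = 0 := by rw [hg3]; simp
    have hL : t^2 * g3 t = ∫ s in (0:ℝ)..t, (2*s*g3 s + s^2*g2 s) := by
      rw [intervalIntegral.integral_eq_sub_of_hasDerivAt (fun s _ => hΦd s)
        (hLc.intervalIntegrable 0 t)]
      simp [hg30]
    have hR : (∫ s in (0:ℝ)..t, (2/(3*α^2*a)) * (α*s*(3 + α*s^2)*Real.exp (α*s^2/2)))
        = (2/(3*α^2*a)) * (g t - g 0) := by
      rw [intervalIntegral.integral_eq_sub_of_hasDerivAt (fun s _ => hΨd s)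
        (hRc.intervalIntegrable 0 t)]
      ring
    have hmono : (∫ s in (0:ℝ)..t, (2*s*g3 s + s^2*g2 s))
        ≤ ∫ s in (0:ℝ)..t, (2/(3*α^2*a)) * (α*s*(3 + α*s^2)*Real.exp (α*s^2/2)) := by
      apply intervalIntegral.integral_mono_on ht (hLc.intervalIntegrable 0 t)
        (hRc.intervalIntegrable 0 t)
      intro s hs
      have hs0 : 0 ≤ s := hs.1
      set Es := Real.exp (α*s^2/2) with hEs
      have hEspos : 0 < Es := Real.exp_pos _
      have hEs1 : 1 ≤ Es := Real.one_le_exp (by positivity)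
      have h3 : α * a * g3 s ≤ Es - 1 := by
        have := hg3bd s hs0
        rw [← hEs] at this
        calc α * a * g3 s ≤ α * a * ((Es - 1)/(α*a)) := by
              apply mul_le_mul_of_nonneg_left this (by positivity)
          _ = Es - 1 := by field_simp
      have h2 : α * g2 s = Es - 1 := by
        rw [hg2c]; field_simp; rfl
      have hK := aux_K (a*s) (by positivity)
      rw [← hax s, ← hEs] at hK
      -- goal: 2 s g3 + s^2 g2 ≤ (2/(3 α^2 a)) (α s (3 + α s^2) Es)
      rw [show (2/(3*α^2*a)) * (α*s*(3 + α*s^2)*Es) = (2*(α*s*(3 + α*s^2)*Es))/(3*α^2*a) by ring,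
        le_div_iff₀ (by positivity)]
      have hstep2 : 6*α*s*(α*a*g3 s) ≤ 6*α*s*(Es-1) :=
        mul_le_mul_of_nonneg_left h3 (by positivity)
      have hstep4 : 3*α*a*s^2*(α*g2 s) ≤ 6*α*s + 2*α^2*s^3*Es := by
        rw [h2]
        have hK3 := mul_le_mul_of_nonneg_left hK (show (0:ℝ) ≤ 3*α*s by positivity)
        have h7 : (0:ℝ) ≤ 3*α*a*s^2 := by positivity
        calc 3*α*a*s^2*(Es-1) = 3*α*s*(a*s*Es) - 3*α*a*s^2 := by ring
          _ ≤ 3*α*s*(2 + (2/3)*(a*s)^2*Es) - 0 := sub_le_sub hK3 h7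
          _ = 6*α*s + 2*α^2*s^3*Es := by rw [← ha2]; ring
      calc (2*s*g3 s + s^2*g2 s) * (3*α^2*a)
          = 6*α*s*(α*a*g3 s) + 3*α*a*s^2*(α*g2 s) := by ring
        _ ≤ 6*α*s*(Es-1) + (6*α*s + 2*α^2*s^3*Es) := add_le_add hstep2 hstep4
        _ = 2*(α*s*(3 + α*s^2)*Es) := by ring
    have hg0 : g 0 = 1 := by rw [hg]; simp
    rw [hL]
    calc (∫ s in (0:ℝ)..t, (2*s*g3 s + s^2*g2 s))
        ≤ (2/(3*α^2*a)) * (g t - g 0) := by rw [← hR]; exact hmono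
      _ ≤ (2/3) * g t / (α^2*a) := by
        have h := mul_le_mul_of_nonneg_left
          (show g t - g 0 ≤ g t by rw [hg0]; linarith)
          (show (0:ℝ) ≤ 2/(3*α^2*a) by positivity)
        calc (2/(3*α^2*a)) * (g t - g 0) ≤ (2/(3*α^2*a)) * g t := h
          _ = (2/3)*g t/(α^2*a) := by ring
end

section
/- Let α > 0 and define g₃(t) = ∫₀ᵗ (1/α)(e^{α s²/2} − 1) ds. Then for every t ≥ 0, t · g₃(t) ≤ (4/3) e^{α t²/2} / α². -/
open Real

/-- for α > 0 and g₃(t) = ∫₀ᵗ (1/α)(e^{α s²/2} − 1) ds, for every t ≥ 0,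
t g₃(t) ≤ (4/3) e^{α t²/2} / α². -/
theorem t_mul_g3_bound
    (α : ℝ) (hα : 0 < α)
    (g3 : ℝ → ℝ)
    (hg3 : ∀ t, g3 t = ∫ s in (0:ℝ)..t, (1 / α) * (Real.exp (α * s ^ 2 / 2) - 1)) :
    ∀ t : ℝ, 0 ≤ t →
      t * g3 t ≤ (4 / 3) * Real.exp (α * t ^ 2 / 2) / α ^ 2 := by
  have hexp : Continuous fun s : ℝ => Real.exp (α * s ^ 2 / 2) := by continuity
  -- derivative of exp(α t²/2)
  have hde : ∀ t : ℝ, HasDerivAt (fun u : ℝ => Real.exp (α * u ^ 2 / 2))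
      (α * t * Real.exp (α * t ^ 2 / 2)) t := by
    intro t
    have h1 : HasDerivAt (fun u : ℝ => α * u ^ 2 / 2) (α * t) t := by
      have := ((hasDerivAt_pow 2 t).const_mul α).div_const 2
      refine this.congr_deriv ?_
      ring
    simpa [mul_comm] using h1.exp
  -- derivative of interval integrals of continuous functions
  have hdint : ∀ f : ℝ → ℝ, Continuous f → ∀ t : ℝ,
      HasDerivAt (fun u => ∫ s in (0:ℝ)..u, f s) (f t) t := by
    intro f hf t
    exact intervalIntegral.integral_hasDerivAt_right (hf.intervalIntegrable 0 t)
      (hf.stronglyMeasurable.stronglyMeasurableAtFilter) hf.continuousAt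
  -- pointwise inequality
  have hpt : ∀ x : ℝ, 0 ≤ x → Real.exp x * (2 - 2 * x) ≤ 6 := by
    intro x hx
    rcases le_or_gt x 1 with h | h
    · have h1 : Real.exp x ≤ Real.exp 1 := Real.exp_le_exp.mpr h
      have h2 : Real.exp 1 < 3 := by
        have := Real.exp_one_lt_d9; linarith
      nlinarith [Real.exp_pos x]
    · nlinarith [Real.exp_pos x]
  -- inner bound: ∫₀ᵗ exp(αs²/2) ≤ t/3 exp(αt²/2) + 2t for t ≥ 0
  set H : ℝ → ℝ := fun t => t / 3 * Real.exp (α * t ^ 2 / 2) + 2 * t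
      - ∫ s in (0:ℝ)..t, Real.exp (α * s ^ 2 / 2) with hHdef
  have hH : ∀ t : ℝ, HasDerivAt H
      (Real.exp (α * t ^ 2 / 2) * (α * t ^ 2 - 2) / 3 + 2) t := by
    intro t
    have h1 : HasDerivAt (fun u : ℝ => u / 3 * Real.exp (α * u ^ 2 / 2))
        (1 / 3 * Real.exp (α * t ^ 2 / 2) + t / 3 * (α * t * Real.exp (α * t ^ 2 / 2))) t := by
      have := ((hasDerivAt_id t).div_const 3).mul (hde t)
      exact this
    have h3 : HasDerivAt (fun u : ℝ => 2 * u) 2 t := by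
      simpa using (hasDerivAt_id t).const_mul 2
    have := (h1.add h3).sub (hdint _ hexp t)
    refine this.congr_deriv ?_
    ring
  have hH' : ∀ t : ℝ, 0 ≤ Real.exp (α * t ^ 2 / 2) * (α * t ^ 2 - 2) / 3 + 2 := by
    intro t
    have hx : 0 ≤ α * t ^ 2 / 2 := by positivity
    have := hpt _ hx
    nlinarith
  have hHmono : MonotoneOn H (Set.Ici (0:ℝ)) := by
    apply monotoneOn_of_deriv_nonneg (convex_Ici 0)
    · exact fun x _ => (hH x).continuousAt.continuousWithinAt
    · exact fun x _ => (hH x).differentiableAt.differentiableWithinAt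
    · intro x _
      rw [(hH x).deriv]
      exact hH' x
  have keyA : ∀ t : ℝ, 0 ≤ t →
      (∫ s in (0:ℝ)..t, Real.exp (α * s ^ 2 / 2)) ≤ t / 3 * Real.exp (α * t ^ 2 / 2) + 2 * t := by
    intro t ht
    have := hHmono (Set.self_mem_Ici) (Set.mem_Ici.mpr ht) ht
    have hH0 : H 0 = 0 := by simp [hHdef]
    rw [hH0] at this
    simp only [hHdef] at this
    linarith
  -- the integral form of g3
  set G : ℝ → ℝ := fun t => ∫ s in (0:ℝ)..t, (1 / α) * (Real.exp (α * s ^ 2 / 2) - 1) with hGdef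
  have hGcont : Continuous fun s : ℝ => (1 / α) * (Real.exp (α * s ^ 2 / 2) - 1) := by
    continuity
  have hGval : ∀ t : ℝ, G t = (1 / α) * ((∫ s in (0:ℝ)..t, Real.exp (α * s ^ 2 / 2)) - t) := by
    intro t
    simp only [hGdef]
    rw [intervalIntegral.integral_const_mul,
      intervalIntegral.integral_sub (hexp.intervalIntegrable 0 t)
        (intervalIntegrable_const)]
    simp
  -- main function
  set F : ℝ → ℝ := fun t => 4 / 3 * Real.exp (α * t ^ 2 / 2) / α ^ 2 - t * G t with hFdef
  have hF : ∀ t : ℝ, HasDerivAt F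
      (4 / 3 * (α * t * Real.exp (α * t ^ 2 / 2)) / α ^ 2
        - (G t + t * ((1 / α) * (Real.exp (α * t ^ 2 / 2) - 1)))) t := by
    intro t
    have h1 := ((hde t).const_mul (4/3)).div_const (α ^ 2)
    have h2 := (hasDerivAt_id t).mul (hdint _ hGcont t)
    have := h1.sub h2
    refine this.congr_deriv ?_
    simp only [hGdef, id]
    ring
  have hF' : ∀ t : ℝ, 0 ≤ t →
      0 ≤ 4 / 3 * (α * t * Real.exp (α * t ^ 2 / 2)) / α ^ 2
        - (G t + t * ((1 / α) * (Real.exp (α * t ^ 2 / 2) - 1))) := by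
    intro t ht
    have hI := keyA t ht
    have hG := hGval t
    set E := Real.exp (α * t ^ 2 / 2) with hE
    set I := (∫ s in (0:ℝ)..t, Real.exp (α * s ^ 2 / 2)) with hI2
    rw [hG, sub_nonneg]
    have hEpos : 0 < E := Real.exp_pos _
    have hαne : α ≠ 0 := ne_of_gt hα
    have e1 : 1 / α * (I - t) + t * (1 / α * (E - 1)) = (I + t * E - 2 * t) / α := by
      field_simp; ring
    have e2 : 4 / 3 * (α * t * E) / α ^ 2 = (4 * t * E / 3) / α := by
      field_simp
    rw [e1, e2, div_le_div_iff₀ hα hα]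
    nlinarith [mul_pos hα hEpos, mul_nonneg ht hEpos.le]
  have hFmono : MonotoneOn F (Set.Ici (0:ℝ)) := by
    apply monotoneOn_of_deriv_nonneg (convex_Ici 0)
    · exact fun x _ => (hF x).continuousAt.continuousWithinAt
    · exact fun x _ => (hF x).differentiableAt.differentiableWithinAt
    · intro x hx
      rw [interior_Ici] at hx
      rw [(hF x).deriv]
      exact hF' x (le_of_lt hx)
  intro t ht
  have hmono := hFmono (Set.self_mem_Ici) (Set.mem_Ici.mpr ht) ht
  have hF0 : 0 ≤ F 0 := by
    simp only [hFdef, hGdef]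
    simp
    positivity
  have : 0 ≤ F t := le_trans hF0 hmono
  simp only [hFdef] at this
  rw [hg3]
  linarith
end

section
/- For every real t, the Dawson function satisfies |D(t)| < 3/5. -/
open Real

/-- The Dawson function D(t) = e^{−t²} ∫₀ᵗ e^{s²} ds. -/
noncomputable def dawson (t : ℝ) : ℝ := Real.exp (-t ^ 2) * ∫ s in (0:ℝ)..t, Real.exp (s ^ 2)

lemma expsq_cont : Continuous (fun s : ℝ => Real.exp (s ^ 2)) := by continuity

lemma expsq_intable (a b : ℝ) :
    IntervalIntegrable (fun s : ℝ => Real.exp (s ^ 2)) MeasureTheory.volume a b :=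
  expsq_cont.intervalIntegrable a b

lemma dawson_odd (t : ℝ) : dawson (-t) = - dawson t := by
  unfold dawson
  have h := intervalIntegral.integral_comp_neg (a := (0:ℝ)) (b := -t)
      (fun s => Real.exp (s ^ 2))
  simp only [neg_neg, neg_zero, neg_sq] at h
  rw [intervalIntegral.integral_symm 0 t] at h
  rw [h, show (-t : ℝ) ^ 2 = t ^ 2 by ring]
  ring

lemma dawson_nonneg {t : ℝ} (ht : 0 ≤ t) : 0 ≤ dawson t := by
  unfold dawson
  apply mul_nonneg (Real.exp_nonneg _)
  apply intervalIntegral.integral_nonneg ht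
  intro s _; positivity

lemma exp_upper {x : ℝ} (h0 : 0 ≤ x) (h1 : x ≤ 1) :
    Real.exp x ≤ 1 + x + x ^ 2 / 2 + x ^ 3 / 6 + 5 * x ^ 4 / 96 := by
  have h := Real.exp_bound' h0 h1 (n := 4) (by norm_num)
  simp [Finset.sum_range_succ, Nat.factorial] at h
  nlinarith [h]

lemma exp_lower (x : ℝ) (h0 : 0 ≤ x) :
    1 + x + x ^ 2 / 2 + x ^ 3 / 6 ≤ Real.exp x := by
  have h := Real.sum_le_exp_of_nonneg h0 4
  simp [Finset.sum_range_succ, Nat.factorial] at h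
  nlinarith [h]

lemma poly_integral (t : ℝ) :
    (∫ s in (0:ℝ)..t, (1 + s ^ 2 + s ^ 4 / 2 + s ^ 6 / 6 + 5 * s ^ 8 / 96))
      = t + t ^ 3 / 3 + t ^ 5 / 10 + t ^ 7 / 42 + 5 * t ^ 9 / 864 := by
  have h : ∀ s : ℝ, HasDerivAt
      (fun u : ℝ => u + u ^ 3 / 3 + u ^ 5 / 10 + u ^ 7 / 42 + 5 * u ^ 9 / 864)
      (1 + s ^ 2 + s ^ 4 / 2 + s ^ 6 / 6 + 5 * s ^ 8 / 96) s := by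
    intro s
    have h1 := ((((hasDerivAt_id s).add ((hasDerivAt_pow 3 s).div_const 3)).add
        ((hasDerivAt_pow 5 s).div_const 10)).add
        ((hasDerivAt_pow 7 s).div_const 42)).add
        (((hasDerivAt_pow 9 s).const_mul 5).div_const 864)
    refine HasDerivAt.congr_deriv h1 ?_
    push_cast
    ring
  rw [intervalIntegral.integral_eq_sub_of_hasDerivAt (fun s _ => h s)
    ((by continuity : Continuous fun s : ℝ =>
      1 + s ^ 2 + s ^ 4 / 2 + s ^ 6 / 6 + 5 * s ^ 8 / 96).intervalIntegrable 0 t)]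
  norm_num

lemma int_upper {t : ℝ} (h0 : 0 ≤ t) (h1 : t ≤ 1) :
    (∫ s in (0:ℝ)..t, Real.exp (s ^ 2))
      ≤ t + t ^ 3 / 3 + t ^ 5 / 10 + t ^ 7 / 42 + 5 * t ^ 9 / 864 := by
  rw [← poly_integral t]
  apply intervalIntegral.integral_mono_on h0 (expsq_intable 0 t)
    ((by continuity : Continuous fun s : ℝ =>
      1 + s ^ 2 + s ^ 4 / 2 + s ^ 6 / 6 + 5 * s ^ 8 / 96).intervalIntegrable 0 t)
  intro s hs
  have hs2 : s ^ 2 ≤ 1 := by nlinarith [hs.1, hs.2]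
  have h := exp_upper (sq_nonneg s) hs2
  nlinarith [h]

lemma int_tail {t : ℝ} (h1 : 1 ≤ t) :
    (∫ s in (1:ℝ)..t, Real.exp (s ^ 2))
      ≤ (Real.exp (t ^ 2) - Real.exp 1) / 2 := by
  have hanti : ∀ s : ℝ, HasDerivAt (fun u : ℝ => Real.exp (u ^ 2) / 2)
      (s * Real.exp (s ^ 2)) s := by
    intro s
    have := ((Real.hasDerivAt_exp (s ^ 2)).comp s (hasDerivAt_pow 2 s)).div_const 2
    refine HasDerivAt.congr_deriv this ?_
    push_cast; ring
  have heq : (∫ s in (1:ℝ)..t, s * Real.exp (s ^ 2))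
      = (Real.exp (t ^ 2) - Real.exp 1) / 2 := by
    rw [intervalIntegral.integral_eq_sub_of_hasDerivAt (fun s _ => hanti s)
      ((by continuity : Continuous fun s : ℝ => s * Real.exp (s ^ 2)).intervalIntegrable 1 t)]
    norm_num [div_sub_div_same]
  rw [← heq]
  apply intervalIntegral.integral_mono_on h1 (expsq_intable 1 t)
    ((by continuity : Continuous fun s : ℝ => s * Real.exp (s ^ 2)).intervalIntegrable 1 t)
  intro s hs
  nlinarith [Real.exp_pos (s ^ 2), hs.1]

lemma dawson_lt_of_nonneg {t : ℝ} (h0 : 0 ≤ t) : dawson t < 3 / 5 := by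
  rcases le_total t 1 with h1 | h1
  · -- small case
    unfold dawson
    have hI := int_upper h0 h1
    have hIpos : (0:ℝ) ≤ ∫ s in (0:ℝ)..t, Real.exp (s ^ 2) := by
      apply intervalIntegral.integral_nonneg h0; intro s _; positivity
    have hlow := exp_lower (t ^ 2) (sq_nonneg t)
    have hepos := Real.exp_pos (t ^ 2)
    rw [Real.exp_neg]
    rw [inv_mul_eq_div, div_lt_iff₀ hepos]
    have hN : t + t ^ 3 / 3 + t ^ 5 / 10 + t ^ 7 / 42 + 5 * t ^ 9 / 864
        < 3 / 5 * (1 + t ^ 2 + t ^ 4 / 2 + t ^ 6 / 6) := by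
      nlinarith [sq_nonneg t, sq_nonneg (1 - t), pow_le_one₀ h0 h1 (n := 2),
        pow_le_one₀ h0 h1 (n := 4), pow_le_one₀ h0 h1 (n := 6),
        pow_le_one₀ h0 h1 (n := 9), mul_nonneg h0 h0]
    calc (∫ s in (0:ℝ)..t, Real.exp (s ^ 2))
        ≤ t + t ^ 3 / 3 + t ^ 5 / 10 + t ^ 7 / 42 + 5 * t ^ 9 / 864 := hI
      _ < 3 / 5 * (1 + t ^ 2 + t ^ 4 / 2 + t ^ 6 / 6) := hN
      _ ≤ 3 / 5 * Real.exp (t ^ 2) := by linarith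
  · -- large case
    unfold dawson
    have hsplit : (∫ s in (0:ℝ)..t, Real.exp (s ^ 2))
        = (∫ s in (0:ℝ)..1, Real.exp (s ^ 2)) + ∫ s in (1:ℝ)..t, Real.exp (s ^ 2) :=
      (intervalIntegral.integral_add_adjacent_intervals (expsq_intable 0 1)
        (expsq_intable 1 t)).symm
    have hJ := int_tail h1
    have hI1 : (∫ s in (0:ℝ)..1, Real.exp (s ^ 2))
        ≤ 1 + 1/3 + 1/10 + 1/42 + 5/864 := by
      have h := int_upper (t := 1) zero_le_one le_rfl
      norm_num at h ⊢
      linarith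
    have hupos : (0:ℝ) < Real.exp (-t ^ 2) := Real.exp_pos _
    have huE : Real.exp (-t ^ 2) * Real.exp (t ^ 2) = 1 := by
      rw [← Real.exp_add]; norm_num
    have hbound : Real.exp (-t ^ 2) * (∫ s in (0:ℝ)..t, Real.exp (s ^ 2))
        ≤ Real.exp (-t ^ 2) * ((1 + 1/3 + 1/10 + 1/42 + 5/864)
            + (Real.exp (t ^ 2) - Real.exp 1) / 2) := by
      apply mul_le_mul_of_nonneg_left _ hupos.le
      rw [hsplit]
      exact add_le_add hI1 hJ
    have he : (2.7182818283:ℝ) < Real.exp 1 := Real.exp_one_gt_d9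
    have hu' : Real.exp (-t ^ 2) ≤ 1 / 2.7182818283 := by
      have h2 : Real.exp (-t ^ 2) ≤ Real.exp (-1) := Real.exp_le_exp.2 (by nlinarith)
      have h3 : Real.exp (-1) * Real.exp 1 = 1 := by rw [← Real.exp_add]; norm_num
      have h4 : Real.exp (-1) < 1 / 2.7182818283 := by
        rw [lt_div_iff₀ (by norm_num)]
        nlinarith [Real.exp_pos (-1)]
      linarith
    have hue2 : 2.7182818283 * Real.exp (-t ^ 2)
        ≤ Real.exp (-t ^ 2) * Real.exp 1 := by nlinarith
    nlinarith [hbound, huE, hu', hue2, hupos]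

/-- |D(t)| < 3/5 for every real t. -/
theorem abs_dawson_lt : ∀ t : ℝ, |dawson t| < 3 / 5 := by
  intro t
  rcases le_total 0 t with h | h
  · rw [abs_of_nonneg (dawson_nonneg h)]
    exact dawson_lt_of_nonneg h
  · have h' : (0:ℝ) ≤ -t := by linarith
    rw [show t = -(-t) by ring, dawson_odd, abs_neg,
      abs_of_nonneg (dawson_nonneg h')]
    exact dawson_lt_of_nonneg h'
end

section
/- For every real t, the Dawson function satisfies |t · D(t)| < 2/3. -/
open Real

namespace DawsonAux

open intervalIntegral

lemma cont_exp_sq : Continuous fun s : ℝ => Real.exp (s^2) :=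
  Real.continuous_exp.comp (continuous_pow 2)

lemma intg (a b : ℝ) : IntervalIntegrable (fun s : ℝ => Real.exp (s^2)) MeasureTheory.volume a b :=
  cont_exp_sq.intervalIntegrable a b

lemma exp_up {x : ℝ} (h0 : 0 ≤ x) (h4 : x ≤ 4) :
    Real.exp x ≤ (1 + x/4 + (x/4)^2/2 + (x/4)^3/6 + (x/4)^4/24 + (x/4)^5/120 + (x/4)^6*7/4320)^4 := by
  have q0 : 0 ≤ x/4 := by linarith
  have q1 : x/4 ≤ 1 := by linarith
  have h := Real.exp_bound' q0 q1 (n := 6) (by norm_num)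
  have h' : Real.exp (x/4) ≤ 1 + x/4 + (x/4)^2/2 + (x/4)^3/6 + (x/4)^4/24 + (x/4)^5/120
      + (x/4)^6*7/4320 := by
    refine h.trans (le_of_eq ?_)
    simp [Finset.sum_range_succ, Nat.factorial]
    push_cast
    ring
  have h2 : Real.exp x = (Real.exp (x/4))^4 := by
    rw [← Real.exp_nat_mul]
    push_cast
    ring_nf
  rw [h2]
  exact pow_le_pow_left₀ (Real.exp_pos _).le h' 4

lemma exp_low {x : ℝ} (h0 : 0 ≤ x) :
    (1 + x/4 + (x/4)^2/2 + (x/4)^3/6 + (x/4)^4/24 + (x/4)^5/120)^4 ≤ Real.exp x := by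
  have q0 : 0 ≤ x/4 := by linarith
  have h := Real.sum_le_exp_of_nonneg q0 6
  have h' : 1 + x/4 + (x/4)^2/2 + (x/4)^3/6 + (x/4)^4/24 + (x/4)^5/120 ≤ Real.exp (x/4) := by
    refine le_trans (le_of_eq ?_) h
    simp [Finset.sum_range_succ, Nat.factorial]
  have h2 : Real.exp x = (Real.exp (x/4))^4 := by
    rw [← Real.exp_nat_mul]
    push_cast
    ring_nf
  rw [h2]
  exact pow_le_pow_left₀ (by positivity) h' 4

lemma chord {a b : ℝ} (h0 : 0 ≤ a) (hab : a < b) :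
    ∫ s in a..b, Real.exp (s^2) ≤ (Real.exp (b^2) - Real.exp (a^2)) / (a+b) := by
  have hab' : (0:ℝ) < a + b := by linarith
  have hD : ∀ s ∈ Set.uIcc a b,
      HasDerivAt (fun u => Real.exp (a^2 + (u-a)*(a+b)) / (a+b))
        (Real.exp (a^2 + (s-a)*(a+b))) s := by
    intro s _
    have h1 : HasDerivAt (fun u : ℝ => a^2 + (u-a)*(a+b)) (a+b) s := by
      simpa using (((hasDerivAt_id s).sub_const a).mul_const (a+b)).const_add (a^2)
    have h2 := (Real.hasDerivAt_exp _).comp s h1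
    have h3 := h2.div_const (a+b)
    simpa [mul_div_assoc, mul_div_cancel_right₀, ne_of_gt hab'] using h3
  have hcont : Continuous fun s : ℝ => Real.exp (a^2 + (s-a)*(a+b)) := by
    apply Real.continuous_exp.comp
    continuity
  have heq : ∫ s in a..b, Real.exp (a^2 + (s-a)*(a+b))
      = (Real.exp (b^2) - Real.exp (a^2)) / (a+b) := by
    rw [integral_eq_sub_of_hasDerivAt hD (hcont.intervalIntegrable a b)]
    have e1 : a^2 + (b-a)*(a+b) = b^2 := by ring
    have e2 : a^2 + (a-a)*(a+b) = a^2 := by ring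
    rw [e1, e2, div_sub_div_same]
  rw [← heq]
  apply integral_mono_on hab.le (cont_exp_sq.intervalIntegrable a b)
    (hcont.intervalIntegrable a b)
  intro s hs
  apply Real.exp_le_exp.2
  nlinarith [hs.1, hs.2]

lemma step {A B R L U t : ℝ} (hA : 0 < A) (hAB : A < B) (ht1 : A ≤ t) (ht2 : t ≤ B)
    (hLpos : 0 < L) (hUpos : 0 < U)
    (hL : L ≤ Real.exp (A^2)) (hU : Real.exp (B^2) ≤ U)
    (hR : ∫ s in (0:ℝ)..B, Real.exp (s^2) ≤ R) (hRpos : 0 ≤ R)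
    (h2A : 1 ≤ 2*A^2) :
    t * dawson t ≤ (A/L - (t-A)*((2*A^2-1)/U))*R - t*(B-t) := by
  have ht0 : 0 < t := lt_of_lt_of_le hA ht1
  have hexp_t : (0:ℝ) < Real.exp (t^2) := Real.exp_pos _
  have hsplit : ∫ s in (0:ℝ)..t, Real.exp (s^2)
      = (∫ s in (0:ℝ)..B, Real.exp (s^2)) - ∫ s in t..B, Real.exp (s^2) := by
    rw [← integral_add_adjacent_intervals (intg 0 t) (intg t B)]
    ring
  have htail : (B - t) * Real.exp (t^2) ≤ ∫ s in t..B, Real.exp (s^2) := by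
    have h1 : ∫ s in t..B, Real.exp (t^2) ≤ ∫ s in t..B, Real.exp (s^2) := by
      apply integral_mono_on ht2 (intervalIntegrable_const) (intg t B)
      intro s hs
      apply Real.exp_le_exp.2
      nlinarith [hs.1, hs.2]
    simpa [intervalIntegral.integral_const, smul_eq_mul] using h1
  have hI : ∫ s in (0:ℝ)..t, Real.exp (s^2) ≤ R - (B - t) * Real.exp (t^2) := by
    rw [hsplit]; linarith
  have hKnn : 0 ≤ (t - A)*(2*A^2 - 1) := by nlinarith
  have hmono : t * Real.exp (-t^2) ≤ A/L - (t-A)*(2*A^2-1)/U := by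
    rw [Real.exp_neg, ← div_eq_mul_inv]
    rw [div_sub_div _ _ (ne_of_gt hLpos) (ne_of_gt hUpos), div_le_div_iff₀ hexp_t (by positivity)]
    have e1 : Real.exp (A^2) * (1 + (t^2 - A^2)) ≤ Real.exp (t^2) := by
      have := Real.add_one_le_exp (t^2 - A^2)
      calc Real.exp (A^2) * (1 + (t^2 - A^2)) ≤ Real.exp (A^2) * Real.exp (t^2 - A^2) := by
            apply mul_le_mul_of_nonneg_left (by linarith) (Real.exp_pos _).le
        _ = Real.exp (t^2) := by rw [← Real.exp_add]; ring_nf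
    have e2 : Real.exp (t^2) ≤ Real.exp (B^2) := Real.exp_le_exp.2 (by nlinarith)
    have hLA : L ≤ Real.exp (A^2) := hL
    have hkey : (t + (t-A)*(2*A^2-1)) * Real.exp (A^2) ≤ A * Real.exp (t^2) := by
      have h1 : t + (t-A)*(2*A^2-1) ≤ A * (1 + (t^2 - A^2)) := by nlinarith [sq_nonneg (t - A)]
      have h2 : 0 ≤ t + (t-A)*(2*A^2-1) := by nlinarith
      calc (t + (t-A)*(2*A^2-1)) * Real.exp (A^2) ≤ (A * (1 + (t^2-A^2))) * Real.exp (A^2) :=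
            mul_le_mul_of_nonneg_right h1 (Real.exp_pos _).le
        _ = Real.exp (A^2) * (1 + (t^2-A^2)) * A := by ring
        _ ≤ Real.exp (t^2) * A := mul_le_mul_of_nonneg_right e1 hA.le
        _ = A * Real.exp (t^2) := by ring
    have htK : 0 ≤ t + (t-A)*(2*A^2-1) := by nlinarith
    have m1 := mul_le_mul_of_nonneg_left hkey hUpos.le
    have m2 := mul_le_mul_of_nonneg_left (mul_le_mul_of_nonneg_right hLA htK) hUpos.le
    have m3 := mul_le_mul_of_nonneg_left (e2.trans hU) (mul_nonneg hLpos.le hKnn)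
    linarith [m1, m2, m3]
  have hmul : t * Real.exp (-t^2) * R ≤ (A/L - (t-A)*((2*A^2-1)/U)) * R := by
    have h := mul_le_mul_of_nonneg_right hmono hRpos
    calc t * Real.exp (-t^2) * R ≤ (A/L - (t-A)*(2*A^2-1)/U) * R := h
      _ = (A/L - (t-A)*((2*A^2-1)/U)) * R := by ring
  calc t * dawson t = (t*Real.exp (-t^2)) * ∫ s in (0:ℝ)..t, Real.exp (s^2) := by
        rw [dawson, ← mul_assoc]
    _ ≤ (t*Real.exp (-t^2)) * (R - (B-t)*Real.exp (t^2)) :=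
        mul_le_mul_of_nonneg_left hI (mul_nonneg ht0.le (Real.exp_pos _).le)
    _ = (t*Real.exp (-t^2))*R - t*(B-t)*(Real.exp (-t^2)*Real.exp (t^2)) := by ring
    _ = (t*Real.exp (-t^2))*R - t*(B-t) := by rw [← Real.exp_add]; simp
    _ ≤ (A/L - (t-A)*((2*A^2-1)/U))*R - t*(B-t) := by linarith [hmul]

noncomputable def gbar (u : ℝ) : ℝ := 2/3 * Real.exp (u^2) / u - ∫ s in (0:ℝ)..u, Real.exp (s^2)

lemma gbar_deriv {u : ℝ} (hu : 0 < u) :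
    HasDerivAt gbar (2/3 * (Real.exp (u^2)*(2*u)*u - Real.exp (u^2)*1)/u^2 - Real.exp (u^2)) u := by
  have h1 : HasDerivAt (fun v : ℝ => Real.exp (v^2)) (Real.exp (u^2)*(2*u)) u := by
    simpa using (hasDerivAt_pow 2 u).exp
  have h2 := (h1.div (hasDerivAt_id u) (ne_of_gt hu)).const_mul (2/3 : ℝ)
  have h4 : HasDerivAt (fun v : ℝ => ∫ s in (0:ℝ)..v, Real.exp (s^2)) (Real.exp (u^2)) u :=
    intervalIntegral.integral_hasDerivAt_right (intg 0 u)
      (cont_exp_sq.stronglyMeasurableAtFilter _ _) cont_exp_sq.continuousAt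
  have := h2.sub h4
  have hf : gbar = ((fun y => 2/3 * ((fun v : ℝ => Real.exp (v^2)) / (id : ℝ → ℝ)) y)
      - fun v => ∫ s in (0:ℝ)..v, Real.exp (s^2)) := by
    funext x
    simp only [gbar, id, Pi.div_apply, Pi.sub_apply]
    ring
  rw [hf]
  refine this.congr_deriv ?_
  simp only [id]
  ring

lemma gbar_mono : MonotoneOn gbar (Set.Ici (1.415:ℝ)) := by
  apply monotoneOn_of_deriv_nonneg (convex_Ici _)
  · intro u hu
    have hu' : (0:ℝ) < u := lt_of_lt_of_le (by norm_num) hu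
    exact (gbar_deriv hu').continuousAt.continuousWithinAt
  · rw [interior_Ici]
    intro u hu
    have hu' : (0:ℝ) < u := lt_trans (by norm_num) hu
    exact (gbar_deriv hu').differentiableAt.differentiableWithinAt
  · rw [interior_Ici]
    intro u hu
    have hu' : (0:ℝ) < u := lt_trans (by norm_num) hu
    rw [(gbar_deriv hu').deriv]
    have hu2 : 2 ≤ u^2 := by nlinarith [(Set.mem_Ioi.1 hu).le]
    have he : (0:ℝ) < Real.exp (u^2) := Real.exp_pos _
    rw [div_sub' (by positivity)]
    apply div_nonneg _ (by positivity)
    nlinarith [he]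


lemma eu1 : Real.exp ((0.2:ℝ)^2) ≤ 1.0408108 := by
  calc Real.exp ((0.2:ℝ)^2) ≤ _ := exp_up (by norm_num) (by norm_num)
    _ ≤ 1.0408108 := by norm_num

lemma el1 : (1.0408107:ℝ) ≤ Real.exp ((0.2:ℝ)^2) := by
  calc (1.0408107:ℝ) ≤ _ := by norm_num
    _ ≤ Real.exp ((0.2:ℝ)^2) := exp_low (by norm_num)

lemma eu2 : Real.exp ((0.4:ℝ)^2) ≤ 1.1735109 := by
  calc Real.exp ((0.4:ℝ)^2) ≤ _ := exp_up (by norm_num) (by norm_num)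
    _ ≤ 1.1735109 := by norm_num

lemma el2 : (1.1735108:ℝ) ≤ Real.exp ((0.4:ℝ)^2) := by
  calc (1.1735108:ℝ) ≤ _ := by norm_num
    _ ≤ Real.exp ((0.4:ℝ)^2) := exp_low (by norm_num)

lemma eu3 : Real.exp ((0.6:ℝ)^2) ≤ 1.4333295 := by
  calc Real.exp ((0.6:ℝ)^2) ≤ _ := exp_up (by norm_num) (by norm_num)
    _ ≤ 1.4333295 := by norm_num

lemma el3 : (1.4333294:ℝ) ≤ Real.exp ((0.6:ℝ)^2) := by
  calc (1.4333294:ℝ) ≤ _ := by norm_num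
    _ ≤ Real.exp ((0.6:ℝ)^2) := exp_low (by norm_num)

lemma eu4 : Real.exp ((0.8:ℝ)^2) ≤ 1.896481 := by
  calc Real.exp ((0.8:ℝ)^2) ≤ _ := exp_up (by norm_num) (by norm_num)
    _ ≤ 1.896481 := by norm_num

lemma el4 : (1.8964807:ℝ) ≤ Real.exp ((0.8:ℝ)^2) := by
  calc (1.8964807:ℝ) ≤ _ := by norm_num
    _ ≤ Real.exp ((0.8:ℝ)^2) := exp_low (by norm_num)

lemma eu5 : Real.exp ((0.9:ℝ)^2) ≤ 2.2479081 := by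
  calc Real.exp ((0.9:ℝ)^2) ≤ _ := exp_up (by norm_num) (by norm_num)
    _ ≤ 2.2479081 := by norm_num

lemma el5 : (2.2479072:ℝ) ≤ Real.exp ((0.9:ℝ)^2) := by
  calc (2.2479072:ℝ) ≤ _ := by norm_num
    _ ≤ Real.exp ((0.9:ℝ)^2) := exp_low (by norm_num)

lemma eu6 : Real.exp ((1:ℝ)^2) ≤ 2.7182823 := by
  calc Real.exp ((1:ℝ)^2) ≤ _ := exp_up (by norm_num) (by norm_num)
    _ ≤ 2.7182823 := by norm_num

lemma el6 : (2.7182788:ℝ) ≤ Real.exp ((1:ℝ)^2) := by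
  calc (2.7182788:ℝ) ≤ _ := by norm_num
    _ ≤ Real.exp ((1:ℝ)^2) := exp_low (by norm_num)

lemma eu7 : Real.exp ((1.08:ℝ)^2) ≤ 3.2104154 := by
  calc Real.exp ((1.08:ℝ)^2) ≤ _ := exp_up (by norm_num) (by norm_num)
    _ ≤ 3.2104154 := by norm_num

lemma el7 : (3.2104057:ℝ) ≤ Real.exp ((1.08:ℝ)^2) := by
  calc (3.2104057:ℝ) ≤ _ := by norm_num
    _ ≤ Real.exp ((1.08:ℝ)^2) := exp_low (by norm_num)

lemma eu8 : Real.exp ((1.15:ℝ)^2) ≤ 3.752794 := by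
  calc Real.exp ((1.15:ℝ)^2) ≤ _ := exp_up (by norm_num) (by norm_num)
    _ ≤ 3.752794 := by norm_num

lemma el8 : (3.7527711:ℝ) ≤ Real.exp ((1.15:ℝ)^2) := by
  calc (3.7527711:ℝ) ≤ _ := by norm_num
    _ ≤ Real.exp ((1.15:ℝ)^2) := exp_low (by norm_num)

lemma eu9 : Real.exp ((1.21:ℝ)^2) ≤ 4.3236547 := by
  calc Real.exp ((1.21:ℝ)^2) ≤ _ := exp_up (by norm_num) (by norm_num)
    _ ≤ 4.3236547 := by norm_num

lemma el9 : (4.3236079:ℝ) ≤ Real.exp ((1.21:ℝ)^2) := by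
  calc (4.3236079:ℝ) ≤ _ := by norm_num
    _ ≤ Real.exp ((1.21:ℝ)^2) := exp_low (by norm_num)

lemma eu10 : Real.exp ((1.26:ℝ)^2) ≤ 4.8920017 := by
  calc Real.exp ((1.26:ℝ)^2) ≤ _ := exp_up (by norm_num) (by norm_num)
    _ ≤ 4.8920017 := by norm_num

lemma el10 : (4.8919183:ℝ) ≤ Real.exp ((1.26:ℝ)^2) := by
  calc (4.8919183:ℝ) ≤ _ := by norm_num
    _ ≤ Real.exp ((1.26:ℝ)^2) := exp_low (by norm_num)

lemma eu11 : Real.exp ((1.31:ℝ)^2) ≤ 5.5628041 := by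
  calc Real.exp ((1.31:ℝ)^2) ≤ _ := exp_up (by norm_num) (by norm_num)
    _ ≤ 5.5628041 := by norm_num

lemma el11 : (5.5626576:ℝ) ≤ Real.exp ((1.31:ℝ)^2) := by
  calc (5.5626576:ℝ) ≤ _ := by norm_num
    _ ≤ Real.exp ((1.31:ℝ)^2) := exp_low (by norm_num)

lemma eu12 : Real.exp ((1.35:ℝ)^2) ≤ 6.1873265 := by
  calc Real.exp ((1.35:ℝ)^2) ≤ _ := exp_up (by norm_num) (by norm_num)
    _ ≤ 6.1873265 := by norm_num

lemma el12 : (6.1870989:ℝ) ≤ Real.exp ((1.35:ℝ)^2) := by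
  calc (6.1870989:ℝ) ≤ _ := by norm_num
    _ ≤ Real.exp ((1.35:ℝ)^2) := exp_low (by norm_num)

lemma eu13 : Real.exp ((1.39:ℝ)^2) ≤ 6.9040215 := by
  calc Real.exp ((1.39:ℝ)^2) ≤ _ := exp_up (by norm_num) (by norm_num)
    _ ≤ 6.9040215 := by norm_num

lemma el13 : (6.9036708:ℝ) ≤ Real.exp ((1.39:ℝ)^2) := by
  calc (6.9036708:ℝ) ≤ _ := by norm_num
    _ ≤ Real.exp ((1.39:ℝ)^2) := exp_low (by norm_num)

lemma eu14 : Real.exp ((1.415:ℝ)^2) ≤ 7.4055506 := by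
  calc Real.exp ((1.415:ℝ)^2) ≤ _ := exp_up (by norm_num) (by norm_num)
    _ ≤ 7.4055506 := by norm_num

lemma el14 : (7.4050928:ℝ) ≤ Real.exp ((1.415:ℝ)^2) := by
  calc (7.4050928:ℝ) ≤ _ := by norm_num
    _ ≤ Real.exp ((1.415:ℝ)^2) := exp_low (by norm_num)

lemma I1 : ∫ s in (0:ℝ)..(0.2:ℝ), Real.exp (s^2) ≤ 0.204054 := by
  have h := chord (a:=(0:ℝ)) (b:=0.2) le_rfl (by norm_num)
  have h0 : Real.exp ((0:ℝ)^2) = 1 := by norm_num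
  rw [h0, le_div_iff₀ (by norm_num : (0:ℝ) < 0 + 0.2)] at h
  linarith [eu1, h]

lemma I2 : ∫ s in (0:ℝ)..(0.4:ℝ), Real.exp (s^2) ≤ 0.425221 := by
  have hsplit := integral_add_adjacent_intervals (intg 0 0.2) (intg 0.2 0.4)
  have h := chord (a:=(0.2:ℝ)) (b:=0.4) (by norm_num) (by norm_num)
  rw [le_div_iff₀ (by norm_num : (0:ℝ) < 0.2 + 0.4)] at h
  linarith [I1, eu2, el1, hsplit, h]

lemma I3 : ∫ s in (0:ℝ)..(0.6:ℝ), Real.exp (s^2) ≤ 0.6850397 := by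
  have hsplit := integral_add_adjacent_intervals (intg 0 0.4) (intg 0.4 0.6)
  have h := chord (a:=(0.4:ℝ)) (b:=0.6) (by norm_num) (by norm_num)
  rw [le_div_iff₀ (by norm_num : (0:ℝ) < 0.4 + 0.6)] at h
  linarith [I2, eu3, el2, hsplit, h]

lemma I4 : ∫ s in (0:ℝ)..(0.8:ℝ), Real.exp (s^2) ≤ 1.0158623 := by
  have hsplit := integral_add_adjacent_intervals (intg 0 0.6) (intg 0.6 0.8)
  have h := chord (a:=(0.6:ℝ)) (b:=0.8) (by norm_num) (by norm_num)
  rw [le_div_iff₀ (by norm_num : (0:ℝ) < 0.6 + 0.8)] at h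
  linarith [I3, eu4, el3, hsplit, h]

lemma I5 : ∫ s in (0:ℝ)..(0.9:ℝ), Real.exp (s^2) ≤ 1.2225843 := by
  have hsplit := integral_add_adjacent_intervals (intg 0 0.8) (intg 0.8 0.9)
  have h := chord (a:=(0.8:ℝ)) (b:=0.9) (by norm_num) (by norm_num)
  rw [le_div_iff₀ (by norm_num : (0:ℝ) < 0.8 + 0.9)] at h
  linarith [I4, eu5, el4, hsplit, h]

lemma I6 : ∫ s in (0:ℝ)..(1:ℝ), Real.exp (s^2) ≤ 1.4701502 := by
  have hsplit := integral_add_adjacent_intervals (intg 0 0.9) (intg 0.9 1)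
  have h := chord (a:=(0.9:ℝ)) (b:=1) (by norm_num) (by norm_num)
  rw [le_div_iff₀ (by norm_num : (0:ℝ) < 0.9 + 1)] at h
  linarith [I5, eu6, el5, hsplit, h]

lemma I7 : ∫ s in (0:ℝ)..(1.08:ℝ), Real.exp (s^2) ≤ 1.7067544 := by
  have hsplit := integral_add_adjacent_intervals (intg 0 1) (intg 1 1.08)
  have h := chord (a:=(1:ℝ)) (b:=1.08) (by norm_num) (by norm_num)
  rw [le_div_iff₀ (by norm_num : (0:ℝ) < 1 + 1.08)] at h
  linarith [I6, eu7, el6, hsplit, h]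

lemma I8 : ∫ s in (0:ℝ)..(1.15:ℝ), Real.exp (s^2) ≤ 1.9499779 := by
  have hsplit := integral_add_adjacent_intervals (intg 0 1.08) (intg 1.08 1.15)
  have h := chord (a:=(1.08:ℝ)) (b:=1.15) (by norm_num) (by norm_num)
  rw [le_div_iff₀ (by norm_num : (0:ℝ) < 1.08 + 1.15)] at h
  linarith [I7, eu8, el7, hsplit, h]

lemma I9 : ∫ s in (0:ℝ)..(1.21:ℝ), Real.exp (s^2) ≤ 2.1918778 := by
  have hsplit := integral_add_adjacent_intervals (intg 0 1.15) (intg 1.15 1.21)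
  have h := chord (a:=(1.15:ℝ)) (b:=1.21) (by norm_num) (by norm_num)
  rw [le_div_iff₀ (by norm_num : (0:ℝ) < 1.15 + 1.21)] at h
  linarith [I8, eu9, el8, hsplit, h]

lemma I10 : ∫ s in (0:ℝ)..(1.26:ℝ), Real.exp (s^2) ≤ 2.4219968 := by
  have hsplit := integral_add_adjacent_intervals (intg 0 1.21) (intg 1.21 1.26)
  have h := chord (a:=(1.21:ℝ)) (b:=1.26) (by norm_num) (by norm_num)
  rw [le_div_iff₀ (by norm_num : (0:ℝ) < 1.21 + 1.26)] at h
  linarith [I9, eu10, el9, hsplit, h]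

lemma I11 : ∫ s in (0:ℝ)..(1.31:ℝ), Real.exp (s^2) ≤ 2.6830419 := by
  have hsplit := integral_add_adjacent_intervals (intg 0 1.26) (intg 1.26 1.31)
  have h := chord (a:=(1.26:ℝ)) (b:=1.31) (by norm_num) (by norm_num)
  rw [le_div_iff₀ (by norm_num : (0:ℝ) < 1.26 + 1.31)] at h
  linarith [I10, eu11, el10, hsplit, h]

lemma I12 : ∫ s in (0:ℝ)..(1.35:ℝ), Real.exp (s^2) ≤ 2.9178799 := by
  have hsplit := integral_add_adjacent_intervals (intg 0 1.31) (intg 1.31 1.35)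
  have h := chord (a:=(1.31:ℝ)) (b:=1.35) (by norm_num) (by norm_num)
  rw [le_div_iff₀ (by norm_num : (0:ℝ) < 1.31 + 1.35)] at h
  linarith [I11, eu12, el11, hsplit, h]

lemma I13 : ∫ s in (0:ℝ)..(1.39:ℝ), Real.exp (s^2) ≤ 3.1795305 := by
  have hsplit := integral_add_adjacent_intervals (intg 0 1.35) (intg 1.35 1.39)
  have h := chord (a:=(1.35:ℝ)) (b:=1.39) (by norm_num) (by norm_num)
  rw [le_div_iff₀ (by norm_num : (0:ℝ) < 1.35 + 1.39)] at h
  linarith [I12, eu13, el12, hsplit, h]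

lemma I14 : ∫ s in (0:ℝ)..(1.415:ℝ), Real.exp (s^2) ≤ 3.3584538 := by
  have hsplit := integral_add_adjacent_intervals (intg 0 1.39) (intg 1.39 1.415)
  have h := chord (a:=(1.39:ℝ)) (b:=1.415) (by norm_num) (by norm_num)
  rw [le_div_iff₀ (by norm_num : (0:ℝ) < 1.39 + 1.415)] at h
  linarith [I13, eu14, el13, hsplit, h]

lemma mid4 {t : ℝ} (h1 : (0.8:ℝ) ≤ t) (h2 : t ≤ 0.9) : t * dawson t < 2/3 := by
  have h := step (A:=0.8) (B:=0.9) (R:=1.2225843) (L:=1.8964807) (U:=2.2479081)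
    (by norm_num) (by norm_num) h1 h2 (by norm_num) (by norm_num) el4 eu5 I5
    (by norm_num) (by norm_num)
  nlinarith [h, mul_nonneg (sub_nonneg.2 h1) (sub_nonneg.2 h2)]

lemma mid5 {t : ℝ} (h1 : (0.9:ℝ) ≤ t) (h2 : t ≤ 1) : t * dawson t < 2/3 := by
  have h := step (A:=0.9) (B:=1) (R:=1.4701502) (L:=2.2479072) (U:=2.7182823)
    (by norm_num) (by norm_num) h1 h2 (by norm_num) (by norm_num) el5 eu6 I6
    (by norm_num) (by norm_num)
  nlinarith [h, mul_nonneg (sub_nonneg.2 h1) (sub_nonneg.2 h2)]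

lemma mid6 {t : ℝ} (h1 : (1:ℝ) ≤ t) (h2 : t ≤ 1.08) : t * dawson t < 2/3 := by
  have h := step (A:=1) (B:=1.08) (R:=1.7067544) (L:=2.7182788) (U:=3.2104154)
    (by norm_num) (by norm_num) h1 h2 (by norm_num) (by norm_num) el6 eu7 I7
    (by norm_num) (by norm_num)
  nlinarith [h, mul_nonneg (sub_nonneg.2 h1) (sub_nonneg.2 h2)]

lemma mid7 {t : ℝ} (h1 : (1.08:ℝ) ≤ t) (h2 : t ≤ 1.15) : t * dawson t < 2/3 := by
  have h := step (A:=1.08) (B:=1.15) (R:=1.9499779) (L:=3.2104057) (U:=3.752794)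
    (by norm_num) (by norm_num) h1 h2 (by norm_num) (by norm_num) el7 eu8 I8
    (by norm_num) (by norm_num)
  nlinarith [h, mul_nonneg (sub_nonneg.2 h1) (sub_nonneg.2 h2)]

lemma mid8 {t : ℝ} (h1 : (1.15:ℝ) ≤ t) (h2 : t ≤ 1.21) : t * dawson t < 2/3 := by
  have h := step (A:=1.15) (B:=1.21) (R:=2.1918778) (L:=3.7527711) (U:=4.3236547)
    (by norm_num) (by norm_num) h1 h2 (by norm_num) (by norm_num) el8 eu9 I9
    (by norm_num) (by norm_num)
  nlinarith [h, mul_nonneg (sub_nonneg.2 h1) (sub_nonneg.2 h2)]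

lemma mid9 {t : ℝ} (h1 : (1.21:ℝ) ≤ t) (h2 : t ≤ 1.26) : t * dawson t < 2/3 := by
  have h := step (A:=1.21) (B:=1.26) (R:=2.4219968) (L:=4.3236079) (U:=4.8920017)
    (by norm_num) (by norm_num) h1 h2 (by norm_num) (by norm_num) el9 eu10 I10
    (by norm_num) (by norm_num)
  nlinarith [h, mul_nonneg (sub_nonneg.2 h1) (sub_nonneg.2 h2)]

lemma mid10 {t : ℝ} (h1 : (1.26:ℝ) ≤ t) (h2 : t ≤ 1.31) : t * dawson t < 2/3 := by
  have h := step (A:=1.26) (B:=1.31) (R:=2.6830419) (L:=4.8919183) (U:=5.5628041)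
    (by norm_num) (by norm_num) h1 h2 (by norm_num) (by norm_num) el10 eu11 I11
    (by norm_num) (by norm_num)
  nlinarith [h, mul_nonneg (sub_nonneg.2 h1) (sub_nonneg.2 h2)]

lemma mid11 {t : ℝ} (h1 : (1.31:ℝ) ≤ t) (h2 : t ≤ 1.35) : t * dawson t < 2/3 := by
  have h := step (A:=1.31) (B:=1.35) (R:=2.9178799) (L:=5.5626576) (U:=6.1873265)
    (by norm_num) (by norm_num) h1 h2 (by norm_num) (by norm_num) el11 eu12 I12
    (by norm_num) (by norm_num)
  nlinarith [h, mul_nonneg (sub_nonneg.2 h1) (sub_nonneg.2 h2)]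

lemma mid12 {t : ℝ} (h1 : (1.35:ℝ) ≤ t) (h2 : t ≤ 1.39) : t * dawson t < 2/3 := by
  have h := step (A:=1.35) (B:=1.39) (R:=3.1795305) (L:=6.1870989) (U:=6.9040215)
    (by norm_num) (by norm_num) h1 h2 (by norm_num) (by norm_num) el12 eu13 I13
    (by norm_num) (by norm_num)
  nlinarith [h, mul_nonneg (sub_nonneg.2 h1) (sub_nonneg.2 h2)]

lemma mid13 {t : ℝ} (h1 : (1.39:ℝ) ≤ t) (h2 : t ≤ 1.415) : t * dawson t < 2/3 := by
  have h := step (A:=1.39) (B:=1.415) (R:=3.3584538) (L:=6.9036708) (U:=7.4055506)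
    (by norm_num) (by norm_num) h1 h2 (by norm_num) (by norm_num) el13 eu14 I14
    (by norm_num) (by norm_num)
  nlinarith [h, mul_nonneg (sub_nonneg.2 h1) (sub_nonneg.2 h2)]

lemma tail_bound {t : ℝ} (ht : (1.415:ℝ) ≤ t) : t * dawson t < 2/3 := by
  have hI : ∫ s in (0:ℝ)..(1.415:ℝ), Real.exp (s^2) ≤ 3.3588 := I14.trans (by norm_num)
  have hL : (7.40404:ℝ) ≤ Real.exp ((1.415:ℝ)^2) := le_trans (by norm_num) el14
  have ht0 : (0:ℝ) < t := by linarith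
  have hgc : 0 < gbar 1.415 := by
    unfold gbar
    have : (3.4883:ℝ) ≤ 2/3 * Real.exp ((1.415:ℝ)^2) / 1.415 := by
      rw [le_div_iff₀ (by norm_num)]
      nlinarith [hL]
    linarith
  have hgt : gbar 1.415 ≤ gbar t := gbar_mono (by norm_num) (by exact ht) ht
  have hint : ∫ s in (0:ℝ)..t, Real.exp (s^2) < 2/3 * Real.exp (t^2) / t := by
    have := lt_of_lt_of_le hgc hgt
    unfold gbar at this
    linarith
  have hpos : 0 < t * Real.exp (-t^2) := mul_pos ht0 (Real.exp_pos _)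
  calc t * dawson t = (t * Real.exp (-t^2)) * ∫ s in (0:ℝ)..t, Real.exp (s^2) := by
        rw [dawson, ← mul_assoc]
    _ < (t * Real.exp (-t^2)) * (2/3 * Real.exp (t^2) / t) := by
        exact mul_lt_mul_of_pos_left hint hpos
    _ = 2/3 * (Real.exp (-t^2) * Real.exp (t^2)) := by field_simp
    _ = 2/3 := by rw [← Real.exp_add]; simp

lemma small_bound {t : ℝ} (ht0 : 0 < t) (ht : t ≤ 0.8) : t * dawson t < 2/3 := by
  have hIle : ∫ s in (0:ℝ)..t, Real.exp (s^2) ≤ t * Real.exp (t^2) := by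
    have h : ∫ s in (0:ℝ)..t, Real.exp (s^2) ≤ ∫ s in (0:ℝ)..t, Real.exp (t^2) := by
      apply intervalIntegral.integral_mono_on ht0.le (intg 0 t) intervalIntegrable_const
      intro s hs
      apply Real.exp_le_exp.2
      nlinarith [hs.1, hs.2]
    simpa [intervalIntegral.integral_const, smul_eq_mul, mul_comm] using h
  have hpos : 0 ≤ t * Real.exp (-t^2) := mul_nonneg ht0.le (Real.exp_pos _).le
  have : t * dawson t ≤ t^2 := by
    calc t * dawson t = (t * Real.exp (-t^2)) * ∫ s in (0:ℝ)..t, Real.exp (s^2) := by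
          rw [dawson, ← mul_assoc]
      _ ≤ (t * Real.exp (-t^2)) * (t * Real.exp (t^2)) := mul_le_mul_of_nonneg_left hIle hpos
      _ = t^2 * (Real.exp (-t^2) * Real.exp (t^2)) := by ring
      _ = t^2 := by rw [← Real.exp_add]; simp
  nlinarith [this]

lemma dawson_nonneg {t : ℝ} (ht : 0 ≤ t) : 0 ≤ dawson t := by
  rw [dawson]
  apply mul_nonneg (Real.exp_pos _).le
  apply intervalIntegral.integral_nonneg ht
  intro s _
  exact (Real.exp_pos _).le

lemma main_nonneg {t : ℝ} (ht : 0 ≤ t) : t * dawson t < 2/3 := by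
  rcases eq_or_lt_of_le ht with h0 | h0
  · rw [← h0]
    norm_num
  rcases le_or_gt t 0.8 with hc | hc
  · exact small_bound h0 hc
  rcases le_or_gt t 0.9 with hc4 | hc4
  · exact mid4 (by linarith) hc4
  rcases le_or_gt t 1 with hc5 | hc5
  · exact mid5 (by linarith) hc5
  rcases le_or_gt t 1.08 with hc6 | hc6
  · exact mid6 (by linarith) hc6
  rcases le_or_gt t 1.15 with hc7 | hc7
  · exact mid7 (by linarith) hc7
  rcases le_or_gt t 1.21 with hc8 | hc8
  · exact mid8 (by linarith) hc8
  rcases le_or_gt t 1.26 with hc9 | hc9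
  · exact mid9 (by linarith) hc9
  rcases le_or_gt t 1.31 with hc10 | hc10
  · exact mid10 (by linarith) hc10
  rcases le_or_gt t 1.35 with hc11 | hc11
  · exact mid11 (by linarith) hc11
  rcases le_or_gt t 1.39 with hc12 | hc12
  · exact mid12 (by linarith) hc12
  rcases le_or_gt t 1.415 with hc13 | hc13
  · exact mid13 (by linarith) hc13
  exact tail_bound (by linarith)

lemma dawson_neg (t : ℝ) : dawson (-t) = - dawson t := by
  rw [dawson, dawson]
  have h1 : ∫ s in (0:ℝ)..(-t), Real.exp (s^2) = - ∫ s in (0:ℝ)..t, Real.exp (s^2) := by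
    have h := intervalIntegral.integral_comp_neg (a := (0:ℝ)) (b := t) (fun s : ℝ => Real.exp (s^2))
    simp only [neg_sq, neg_zero] at h
    rw [intervalIntegral.integral_symm (-t) 0, ← h]
  have h2 : (-t)^2 = t^2 := neg_sq t
  rw [h1, h2]
  ring

end DawsonAux

/-- |t D(t)| < 2/3 for every real t. -/
theorem abs_t_mul_dawson_lt : ∀ t : ℝ, |t * dawson t| < 2 / 3 := by
  intro t
  rcases le_or_gt 0 t with h | h
  · rw [abs_of_nonneg (mul_nonneg h (DawsonAux.dawson_nonneg h))]
    exact DawsonAux.main_nonneg h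
  · have hd : t * dawson t = (-t) * dawson (-t) := by
      rw [DawsonAux.dawson_neg]
      ring
    rw [hd, abs_of_nonneg (mul_nonneg (by linarith) (DawsonAux.dawson_nonneg (by linarith)))]
    exact DawsonAux.main_nonneg (by linarith)
end

section
/- Let g : [0,∞) → (0,∞) be continuous and monotonically increasing, with g₃(t) = ∫₀ᵗ (∫₀^s (∫₀^u g(v) dv) du) ds. Then for every X ≥ 0, ∫₀^{X} s (X − s)³ g(s) ds ≤ (X²/2) g₃(X). -/
open Real Set

/-- for continuous, monotonically increasing g : [0,∞) → (0,∞), with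
g₃(t) = ∫₀ᵗ (∫₀ˢ (∫₀ᵘ g) du) ds, for every X ≥ 0:
∫₀^X s (X−s)³ g(s) ds ≤ (X²/2) g₃(X). -/
theorem integral_s_cubic_weight_le
    (g g3 : ℝ → ℝ)
    (hg_cont : ContinuousOn g (Ici (0 : ℝ)))
    (hg_mono : MonotoneOn g (Ici (0 : ℝ)))
    (hg_pos : ∀ t : ℝ, 0 ≤ t → 0 < g t)
    (hg3 : ∀ t, g3 t = ∫ s in (0:ℝ)..t, ∫ u in (0:ℝ)..s, ∫ v in (0:ℝ)..u, g v) :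
    ∀ X : ℝ, 0 ≤ X →
      (∫ s in (0:ℝ)..X, s * (X - s) ^ 3 * g s) ≤ X ^ 2 / 2 * g3 X := by
  intro X hX
  set G : ℝ → ℝ := fun v => g (max v 0) with hGdef
  have hGc : Continuous G :=
    hg_cont.comp_continuous (continuous_id.max continuous_const) (fun x => le_max_right x 0)
  have hGnn : ∀ s : ℝ, 0 ≤ G s := fun s => (hg_pos _ (le_max_right s 0)).le
  have hGeq : ∀ t : ℝ, 0 ≤ t → (∫ v in (0:ℝ)..t, g v) = ∫ v in (0:ℝ)..t, G v := by
    intro t ht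
    refine intervalIntegral.integral_congr (fun x hx => ?_)
    rw [uIcc_of_le ht] at hx
    simp [hGdef, max_eq_left hx.1]
  set F1 : ℝ → ℝ := fun t => ∫ v in (0:ℝ)..t, G v with hF1def
  have hF1d : ∀ x : ℝ, HasDerivAt F1 (G x) x := fun x =>
    intervalIntegral.integral_hasDerivAt_right (hGc.intervalIntegrable _ _)
      (hGc.stronglyMeasurableAtFilter _ _) hGc.continuousAt
  have hF1c : Continuous F1 :=
    continuous_iff_continuousAt.2 fun x => (hF1d x).continuousAt
  set F2 : ℝ → ℝ := fun t => ∫ v in (0:ℝ)..t, F1 v with hF2def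
  have hF2d : ∀ x : ℝ, HasDerivAt F2 (F1 x) x := fun x =>
    intervalIntegral.integral_hasDerivAt_right (hF1c.intervalIntegrable _ _)
      (hF1c.stronglyMeasurableAtFilter _ _) hF1c.continuousAt
  have hg3X : g3 X = ∫ s in (0:ℝ)..X, F2 s := by
    rw [hg3]
    refine intervalIntegral.integral_congr (fun s hs => ?_)
    rw [uIcc_of_le hX] at hs
    rw [hF2def]
    refine intervalIntegral.integral_congr (fun u hu => ?_)
    rw [uIcc_of_le hs.1] at hu
    exact hGeq u hu.1
  have hF10 : F1 0 = 0 := intervalIntegral.integral_same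
  have hF20 : F2 0 = 0 := intervalIntegral.integral_same
  -- IBP 1 : ∫ F2 = ∫ (X - s) * F1 s
  have ibp1 : (∫ s in (0:ℝ)..X, F2 s) = ∫ s in (0:ℝ)..X, (X - s) * F1 s := by
    have h := intervalIntegral.integral_mul_deriv_eq_deriv_mul (a := 0) (b := X)
      (u := F2) (u' := F1) (v := fun s => s - X) (v' := fun _ => (1:ℝ))
      (fun x _ => hF2d x)
      (fun x _ => by simpa using (hasDerivAt_id x).sub_const X)
      (hF1c.intervalIntegrable _ _)
      intervalIntegrable_const
    have h2 : (∫ s in (0:ℝ)..X, (X - s) * F1 s)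
        = ∫ s in (0:ℝ)..X, -(F1 s * (s - X)) :=
      intervalIntegral.integral_congr fun s _ => by ring
    rw [h2, intervalIntegral.integral_neg]
    simp only [mul_one, sub_self, mul_zero, hF20, zero_mul, zero_sub, sub_zero] at h
    linarith [h]
  -- IBP 2 : ∫ (X - s) * F1 s = ∫ (X - s)^2 / 2 * G s
  have ibp2 : (∫ s in (0:ℝ)..X, (X - s) * F1 s)
      = ∫ s in (0:ℝ)..X, (X - s) ^ 2 / 2 * G s := by
    have hvd : ∀ x : ℝ, HasDerivAt (fun s : ℝ => -((X - s) ^ 2) / 2) (X - x) x := by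
      intro x
      have h1 : HasDerivAt (fun s : ℝ => X - s) (-1) x := (hasDerivAt_id x).const_sub X
      have h2 : HasDerivAt (fun s : ℝ => -((X - s) ^ 2) / 2)
          (-(((2:ℕ):ℝ) * (X - x) ^ (2 - 1) * -1) / 2) x := (h1.pow 2).neg.div_const 2
      convert h2 using 1
      ring
    have h := intervalIntegral.integral_mul_deriv_eq_deriv_mul (a := 0) (b := X)
      (u := F1) (u' := G) (v := fun s => -((X - s) ^ 2) / 2) (v' := fun s => X - s)
      (fun x _ => hF1d x)
      (fun x _ => hvd x)
      (hGc.intervalIntegrable _ _)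
      ((continuous_const.sub continuous_id).intervalIntegrable _ _)
    have h1 : (∫ s in (0:ℝ)..X, (X - s) * F1 s)
        = ∫ s in (0:ℝ)..X, F1 s * (X - s) :=
      intervalIntegral.integral_congr fun s _ => by ring
    have h2 : (∫ s in (0:ℝ)..X, (X - s) ^ 2 / 2 * G s)
        = ∫ s in (0:ℝ)..X, -(G s * (-((X - s) ^ 2) / 2)) :=
      intervalIntegral.integral_congr fun s _ => by ring
    rw [h1, h2, intervalIntegral.integral_neg]
    simp only [sub_self, hF10, zero_mul, sub_zero] at h
    rw [h]
    ring
  -- pull constant inside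
  have hconst : X ^ 2 / 2 * g3 X
      = ∫ s in (0:ℝ)..X, X ^ 2 / 2 * ((X - s) ^ 2 / 2 * G s) := by
    rw [hg3X, ibp1, ibp2, intervalIntegral.integral_const_mul]
  -- replace g by G in LHS
  have hLHS : (∫ s in (0:ℝ)..X, s * (X - s) ^ 3 * g s)
      = ∫ s in (0:ℝ)..X, s * (X - s) ^ 3 * G s := by
    refine intervalIntegral.integral_congr (fun s hs => ?_)
    rw [uIcc_of_le hX] at hs
    simp [hGdef, max_eq_left hs.1]
  rw [hLHS, hconst]
  refine intervalIntegral.integral_mono_on hX ?_ ?_ ?_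
  · exact (((continuous_id.mul ((continuous_const.sub continuous_id).pow 3)).mul hGc)).intervalIntegrable _ _
  · have hc : Continuous fun s : ℝ => X ^ 2 / 2 * ((X - s) ^ 2 / 2 * G s) :=
      continuous_const.mul ((((continuous_const.sub continuous_id).pow 2).div_const 2).mul hGc)
    exact hc.intervalIntegrable _ _
  · intro s hs
    have h1 : s * (X - s) ^ 3 ≤ X ^ 2 / 2 * ((X - s) ^ 2 / 2) := by
      nlinarith [sq_nonneg (X - 2 * s), sq_nonneg (X - s), hs.1, hs.2]
    calc s * (X - s) ^ 3 * G s ≤ X ^ 2 / 2 * ((X - s) ^ 2 / 2) * G s :=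
          mul_le_mul_of_nonneg_right h1 (hGnn s)
      _ = X ^ 2 / 2 * ((X - s) ^ 2 / 2 * G s) := by ring
end

section
/- Let g : [0,∞) → (0,∞) be continuous and monotonically increasing, with g₁(t) = ∫₀ᵗ g(s) ds, g₂(t) = ∫₀ᵗ g₁(s) ds and g₃(t) = ∫₀ᵗ g₂(s) ds. Then for all X ≥ 0 and Y ≥ 0, ∫₀^{X} (X − s)³ g(s) (∫₀^{Y} (s + t) g(t) dt) ds ≤ X² g₂(X) · Y g₁(Y) + (X²/2) g₃(X) · g₁(Y). -/
open Real Set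

lemma hasDerivAt_prim (G : ℝ → ℝ) (hG : Continuous G) (x : ℝ) :
    HasDerivAt (fun u => ∫ t in (0:ℝ)..u, G t) (G x) x :=
  intervalIntegral.integral_hasDerivAt_right (hG.intervalIntegrable 0 x)
    (hG.stronglyMeasurableAtFilter _ _) hG.continuousAt

lemma cont_prim (G : ℝ → ℝ) (hG : Continuous G) :
    Continuous (fun u => ∫ t in (0:ℝ)..u, G t) :=
  (Differentiable.continuous (fun x => (hasDerivAt_prim G hG x).differentiableAt))

lemma cauchy2 (G : ℝ → ℝ) (hG : Continuous G) (x : ℝ) :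
    (∫ t in (0:ℝ)..x, ∫ s in (0:ℝ)..t, G s) = ∫ s in (0:ℝ)..x, (x - s) * G s := by
  set G1 : ℝ → ℝ := fun u => ∫ t in (0:ℝ)..u, G t with hG1def
  have hG1d : ∀ u, HasDerivAt G1 (G u) u := hasDerivAt_prim G hG
  have hG1c : Continuous G1 := cont_prim G hG
  have hSGc : Continuous (fun t => t * G t) := continuous_id.mul hG
  set F : ℝ → ℝ := fun u => u * G1 u - (∫ t in (0:ℝ)..u, t * G t) - ∫ t in (0:ℝ)..u, G1 t
    with hFdef
  have hF : ∀ u, HasDerivAt F 0 u := by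
    intro u
    have h1 := (hasDerivAt_id u).mul (hG1d u)
    have h2 := hasDerivAt_prim _ hSGc u
    have h3 := hasDerivAt_prim _ hG1c u
    have := (h1.sub h2).sub h3
    refine this.congr_deriv ?_
    simp only [id_eq]
    ring
  have hFx : F x = 0 := by
    have := is_const_of_deriv_eq_zero (fun u => (hF u).differentiableAt)
      (fun u => (hF u).deriv) x 0
    rw [this]; simp [hFdef, hG1def]
  have expand : ∫ s in (0:ℝ)..x, (x - s) * G s
      = x * G1 x - ∫ t in (0:ℝ)..x, t * G t := by
    have h : EqOn (fun s => (x - s) * G s) (fun s => x * G s - s * G s) (uIcc 0 x) := by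
      intro s _; ring
    rw [intervalIntegral.integral_congr h,
      intervalIntegral.integral_sub ((by fun_prop : Continuous fun s => x * G s).intervalIntegrable _ _)
        (hSGc.intervalIntegrable _ _), intervalIntegral.integral_const_mul]
  simp only [hFdef] at hFx
  rw [expand]
  linarith

lemma cauchy3 (G : ℝ → ℝ) (hG : Continuous G) (x : ℝ) :
    (∫ t in (0:ℝ)..x, ∫ u in (0:ℝ)..t, ∫ s in (0:ℝ)..u, G s)
      = ∫ s in (0:ℝ)..x, (x - s) ^ 2 / 2 * G s := by
  set G1 : ℝ → ℝ := fun u => ∫ t in (0:ℝ)..u, G t with hG1def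
  set G2 : ℝ → ℝ := fun u => ∫ t in (0:ℝ)..u, G1 t with hG2def
  set SG : ℝ → ℝ := fun u => ∫ t in (0:ℝ)..u, t * G t with hSGdef
  have hG1d : ∀ u, HasDerivAt G1 (G u) u := hasDerivAt_prim G hG
  have hG1c : Continuous G1 := cont_prim G hG
  have hG2d : ∀ u, HasDerivAt G2 (G1 u) u := hasDerivAt_prim G1 hG1c
  have hG2c : Continuous G2 := cont_prim G1 hG1c
  have hSGc : Continuous (fun t : ℝ => t * G t) := continuous_id.mul hG
  have hSGd : ∀ u, HasDerivAt SG (u * G u) u := hasDerivAt_prim _ hSGc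
  have hS2c : Continuous (fun t : ℝ => t ^ 2 * G t) := (continuous_pow 2).mul hG
  set F : ℝ → ℝ := fun u => u ^ 2 / 2 * G1 u - u * SG u
      + (1/2) * (∫ t in (0:ℝ)..u, t ^ 2 * G t) - ∫ t in (0:ℝ)..u, G2 t with hFdef
  have hF : ∀ u, HasDerivAt F 0 u := by
    intro u
    have h1 := ((hasDerivAt_pow 2 u).div_const 2).mul (hG1d u)
    have h2 := (hasDerivAt_id u).mul (hSGd u)
    have h3 := (hasDerivAt_prim _ hS2c u).const_mul (1/2 : ℝ)
    have h4 := hasDerivAt_prim _ hG2c u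
    have h := (((h1.sub h2).add h3).sub h4)
    refine h.congr_deriv ?_
    have hG2u : G2 u = u * G1 u - SG u := by
      have := cauchy2 G hG u
      have expand : ∫ s in (0:ℝ)..u, (u - s) * G s = u * G1 u - SG u := by
        have heq : EqOn (fun s => (u - s) * G s) (fun s => u * G s - s * G s) (uIcc 0 u) := by
          intro s _; ring
        rw [intervalIntegral.integral_congr heq,
          intervalIntegral.integral_sub ((by fun_prop : Continuous fun s => u * G s).intervalIntegrable _ _)
            (hSGc.intervalIntegrable _ _), intervalIntegral.integral_const_mul]
      rw [hG2def]
      simpa [expand] using this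
    simp only [id_eq, hG2u]
    ring
  have hFx : F x = 0 := by
    have := is_const_of_deriv_eq_zero (fun u => (hF u).differentiableAt)
      (fun u => (hF u).deriv) x 0
    rw [this]; simp [hFdef, hSGdef, hG1def, hG2def]
  have expand : ∫ s in (0:ℝ)..x, (x - s) ^ 2 / 2 * G s
      = x ^ 2 / 2 * G1 x - x * SG x + (1/2) * ∫ t in (0:ℝ)..x, t ^ 2 * G t := by
    have h : EqOn (fun s => (x - s) ^ 2 / 2 * G s)
        (fun s => x ^ 2 / 2 * G s - x * (s * G s) + (1/2) * (s ^ 2 * G s)) (uIcc 0 x) := by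
      intro s _; ring
    rw [intervalIntegral.integral_congr h,
      intervalIntegral.integral_add
        ((by fun_prop : Continuous fun s => x ^ 2 / 2 * G s - x * (s * G s)).intervalIntegrable _ _)
        ((by fun_prop : Continuous fun s => (1/2 : ℝ) * (s ^ 2 * G s)).intervalIntegrable _ _),
      intervalIntegral.integral_sub ((by fun_prop : Continuous fun s => x ^ 2 / 2 * G s).intervalIntegrable _ _)
        ((by fun_prop : Continuous fun s => x * (s * G s)).intervalIntegrable _ _),
      intervalIntegral.integral_const_mul, intervalIntegral.integral_const_mul,
      intervalIntegral.integral_const_mul]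
  simp only [hFdef] at hFx
  rw [expand]
  linarith

/-- for continuous, monotonically increasing g : [0,∞) → (0,∞), with
iterated antiderivatives g₁, g₂, g₃, for all X ≥ 0 and Y ≥ 0:
∫₀^X (X−s)³ g(s) (∫₀^Y (s+t) g(t) dt) ds ≤ X² g₂(X) Y g₁(Y) + (X²/2) g₃(X) g₁(Y). -/
theorem integral_massmass_le
    (g g1 g2 g3 : ℝ → ℝ)
    (hg_cont : ContinuousOn g (Ici (0 : ℝ)))
    (hg_mono : MonotoneOn g (Ici (0 : ℝ)))
    (hg_pos : ∀ t : ℝ, 0 ≤ t → 0 < g t)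
    (hg1 : ∀ t, g1 t = ∫ s in (0:ℝ)..t, g s)
    (hg2 : ∀ t, g2 t = ∫ s in (0:ℝ)..t, g1 s)
    (hg3 : ∀ t, g3 t = ∫ s in (0:ℝ)..t, g2 s) :
    ∀ X Y : ℝ, 0 ≤ X → 0 ≤ Y →
      (∫ s in (0:ℝ)..X, (X - s) ^ 3 * g s * ∫ t in (0:ℝ)..Y, (s + t) * g t)
        ≤ X ^ 2 * g2 X * (Y * g1 Y) + X ^ 2 / 2 * g3 X * g1 Y := by
  intro X Y hX hY
  set G : ℝ → ℝ := fun s => g (max s 0) with hGdef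
  have hGg : ∀ s : ℝ, 0 ≤ s → G s = g s := fun s hs => by
    simp [hGdef, max_eq_left hs]
  have hGc : Continuous G :=
    hg_cont.comp_continuous (continuous_id.max continuous_const) (fun x => le_max_right x 0)
  have hGpos : ∀ s : ℝ, 0 < G s := fun s => hg_pos _ (le_max_right s 0)
  set C1 : ℝ := ∫ t in (0:ℝ)..Y, G t with hC1def
  set C2 : ℝ := ∫ t in (0:ℝ)..Y, t * G t with hC2def
  -- congruence lemmas
  have hgG : ∀ t : ℝ, 0 ≤ t → (∫ s in (0:ℝ)..t, g s) = ∫ s in (0:ℝ)..t, G s := by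
    intro t ht
    apply intervalIntegral.integral_congr
    intro s hs
    rw [uIcc_of_le ht] at hs
    exact (hGg s hs.1).symm
  have hg1G : ∀ t : ℝ, 0 ≤ t → g1 t = ∫ s in (0:ℝ)..t, G s := fun t ht =>
    (hg1 t).trans (hgG t ht)
  have hg2G : ∀ t : ℝ, 0 ≤ t → g2 t = ∫ u in (0:ℝ)..t, ∫ s in (0:ℝ)..u, G s := by
    intro t ht
    rw [hg2]
    apply intervalIntegral.integral_congr
    intro u hu
    rw [uIcc_of_le ht] at hu
    exact hg1G u hu.1
  have hg2X : g2 X = ∫ s in (0:ℝ)..X, (X - s) * G s :=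
    (hg2G X hX).trans (cauchy2 G hGc X)
  have hg3X : g3 X = ∫ s in (0:ℝ)..X, (X - s) ^ 2 / 2 * G s := by
    rw [hg3]
    have h : (∫ t in (0:ℝ)..X, g2 t)
        = ∫ t in (0:ℝ)..X, ∫ u in (0:ℝ)..t, ∫ s in (0:ℝ)..u, G s := by
      apply intervalIntegral.integral_congr
      intro t ht
      rw [uIcc_of_le hX] at ht
      exact hg2G t ht.1
    rw [h, cauchy3 G hGc X]
  have hg1Y : g1 Y = C1 := hg1G Y hY
  -- rewrite inner integral
  have hinner : ∀ s : ℝ, (∫ t in (0:ℝ)..Y, (s + t) * g t) = s * C1 + C2 := by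
    intro s
    have h1 : (∫ t in (0:ℝ)..Y, (s + t) * g t)
        = ∫ t in (0:ℝ)..Y, (s * G t + t * G t) := by
      apply intervalIntegral.integral_congr
      intro t ht
      rw [uIcc_of_le hY] at ht
      simp only
      rw [hGg t ht.1]; ring
    rw [h1, intervalIntegral.integral_add ((by fun_prop : Continuous fun t => s * G t).intervalIntegrable _ _)
      ((by fun_prop : Continuous fun t : ℝ => t * G t).intervalIntegrable _ _), intervalIntegral.integral_const_mul]
  -- rewrite LHS
  have hL : (∫ s in (0:ℝ)..X, (X - s) ^ 3 * g s * ∫ t in (0:ℝ)..Y, (s + t) * g t)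
      = ∫ s in (0:ℝ)..X, (X - s) ^ 3 * G s * (s * C1 + C2) := by
    apply intervalIntegral.integral_congr
    intro s hs
    rw [uIcc_of_le hX] at hs
    simp only
    rw [hinner s, hGg s hs.1]
  -- basic positivity facts
  have hC1nn : 0 ≤ C1 := by
    apply intervalIntegral.integral_nonneg hY
    intro t _; exact (hGpos t).le
  have hC2Y : C2 ≤ Y * C1 := by
    rw [hC1def, ← intervalIntegral.integral_const_mul]
    apply intervalIntegral.integral_mono_on hY
      ((continuous_id.mul hGc).intervalIntegrable _ _)
      ((continuous_const.mul hGc).intervalIntegrable _ _)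
    intro t ht
    exact mul_le_mul_of_nonneg_right ht.2 (hGpos t).le
  have hC2nn : 0 ≤ C2 := by
    apply intervalIntegral.integral_nonneg hY
    intro t ht; exact mul_nonneg ht.1 (hGpos t).le
  -- pointwise bound and integrate
  have hmono : (∫ s in (0:ℝ)..X, (X - s) ^ 3 * G s * (s * C1 + C2))
      ≤ ∫ s in (0:ℝ)..X, (C1 * X ^ 2 * Y) * ((X - s) * G s)
          + (C1 * X ^ 2 / 2) * ((X - s) ^ 2 / 2 * G s) := by
    apply intervalIntegral.integral_mono_on hX
    · have : Continuous fun s : ℝ => (X - s) ^ 3 * G s * (s * C1 + C2) := by fun_prop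
      exact this.intervalIntegrable _ _
    · have : Continuous fun s : ℝ => (C1 * X ^ 2 * Y) * ((X - s) * G s)
          + (C1 * X ^ 2 / 2) * ((X - s) ^ 2 / 2 * G s) := by fun_prop
      exact this.intervalIntegrable _ _
    · intro s hs
      obtain ⟨hs0, hsX⟩ := hs
      have hxs : 0 ≤ X - s := by linarith
      have hGs := (hGpos s).le
      have key : (X - s) ^ 3 * (s + Y) ≤ X ^ 2 * Y * (X - s) + X ^ 2 / 4 * (X - s) ^ 2 := by
        nlinarith [mul_nonneg (mul_nonneg (mul_nonneg hY hxs) hs0) (by linarith : (0:ℝ) ≤ 2 * X - s),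
          mul_nonneg (sq_nonneg (X - s)) (sq_nonneg (X - 2 * s))]
      have h1 : s * C1 + C2 ≤ (s + Y) * C1 := by nlinarith
      calc (X - s) ^ 3 * G s * (s * C1 + C2)
          ≤ (X - s) ^ 3 * G s * ((s + Y) * C1) := by
            apply mul_le_mul_of_nonneg_left h1
            exact mul_nonneg (by positivity) hGs
        _ ≤ (C1 * X ^ 2 * Y) * ((X - s) * G s)
            + (C1 * X ^ 2 / 2) * ((X - s) ^ 2 / 2 * G s) := by
            have := mul_le_mul_of_nonneg_right key (mul_nonneg hGs hC1nn)
            nlinarith [this]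
  -- compute the right integral
  have hR : (∫ s in (0:ℝ)..X, (C1 * X ^ 2 * Y) * ((X - s) * G s)
        + (C1 * X ^ 2 / 2) * ((X - s) ^ 2 / 2 * G s))
      = (C1 * X ^ 2 * Y) * g2 X + (C1 * X ^ 2 / 2) * g3 X := by
    rw [intervalIntegral.integral_add
        ((by fun_prop : Continuous fun s : ℝ => (C1 * X ^ 2 * Y) * ((X - s) * G s)).intervalIntegrable _ _)
        ((by fun_prop : Continuous fun s : ℝ => (C1 * X ^ 2 / 2) * ((X - s) ^ 2 / 2 * G s)).intervalIntegrable _ _),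
      intervalIntegral.integral_const_mul, intervalIntegral.integral_const_mul,
      hg2X, hg3X]
  rw [hL, hg1Y]
  calc (∫ s in (0:ℝ)..X, (X - s) ^ 3 * G s * (s * C1 + C2))
      ≤ (C1 * X ^ 2 * Y) * g2 X + (C1 * X ^ 2 / 2) * g3 X := by rw [← hR]; exact hmono
    _ = X ^ 2 * g2 X * (Y * C1) + X ^ 2 / 2 * g3 X * C1 := by ring
end

section
/- Let g : [0,∞) → (0,∞) be continuous and monotonically increasing, with g₁(t) = ∫₀ᵗ g(s) ds, g₂(t) = ∫₀ᵗ g₁(s) ds and g₃(t) = ∫₀ᵗ g₂(s) ds. Then for all X ≥ 0 and Y ≥ 0, ∫₀^{X} (X − ρ) g(ρ) [ |Y − ρ| g₁(Y) + g₂(min(ρ, Y)) ] dρ ≤ 3 (X + Y) g₂(X) g₁(Y) + 2 g₃(X) g₁(Y). -/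
open Real Set

/-- for continuous, monotonically increasing g : [0,∞) → (0,∞), with
iterated antiderivatives g₁, g₂, g₃, for all X ≥ 0 and Y ≥ 0:
∫₀^X (X−ρ) g(ρ) [ |Y−ρ| g₁(Y) + g₂(min(ρ,Y)) ] dρ ≤ 3 (X+Y) g₂(X) g₁(Y) + 2 g₃(X) g₁(Y). -/
theorem integral_mixed_term_le
    (g g1 g2 g3 : ℝ → ℝ)
    (hg_cont : ContinuousOn g (Ici (0 : ℝ)))
    (hg_mono : MonotoneOn g (Ici (0 : ℝ)))
    (hg_pos : ∀ t : ℝ, 0 ≤ t → 0 < g t)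
    (hg1 : ∀ t, g1 t = ∫ s in (0:ℝ)..t, g s)
    (hg2 : ∀ t, g2 t = ∫ s in (0:ℝ)..t, g1 s)
    (hg3 : ∀ t, g3 t = ∫ s in (0:ℝ)..t, g2 s) :
    ∀ X Y : ℝ, 0 ≤ X → 0 ≤ Y →
      (∫ ρ in (0:ℝ)..X, (X - ρ) * g ρ * (|Y - ρ| * g1 Y + g2 (min ρ Y)))
        ≤ 3 * (X + Y) * g2 X * g1 Y + 2 * g3 X * g1 Y := by
  intro X Y hX hY
  set G : ℝ → ℝ := fun t => g (max t 0) with hG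
  have hGc : Continuous G :=
    hg_cont.comp_continuous (continuous_id.max continuous_const)
      (fun x => mem_Ici.mpr (le_max_right x 0))
  have hGpos : ∀ t, 0 < G t := fun t => hg_pos _ (le_max_right t 0)
  have hGmono : Monotone G := fun s t hst =>
    hg_mono (le_max_right s 0) (le_max_right t 0) (max_le_max hst le_rfl)
  set G1 : ℝ → ℝ := fun t => ∫ s in (0:ℝ)..t, G s with hG1def
  have hG1c : Continuous G1 := by
    have := fun b => (hGc.integral_hasStrictDerivAt 0 b).hasDerivAt
    exact continuous_iff_continuousAt.mpr fun b => (this b).continuousAt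
  set G2 : ℝ → ℝ := fun t => ∫ s in (0:ℝ)..t, G1 s with hG2def
  have hG2c : Continuous G2 := by
    have := fun b => (hG1c.integral_hasStrictDerivAt 0 b).hasDerivAt
    exact continuous_iff_continuousAt.mpr fun b => (this b).continuousAt
  -- equality of g1, g2, g3 with G1, G2, G3 on nonneg inputs
  have hg1G : ∀ t, 0 ≤ t → g1 t = G1 t := by
    intro t ht
    rw [hg1]
    apply intervalIntegral.integral_congr
    intro s hs
    rw [uIcc_of_le ht] at hs
    simp [hG, max_eq_left hs.1]
  have hg2G : ∀ t, 0 ≤ t → g2 t = G2 t := by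
    intro t ht
    rw [hg2]
    apply intervalIntegral.integral_congr
    intro s hs
    rw [uIcc_of_le ht] at hs
    exact hg1G s hs.1
  have hg3G : g3 X = ∫ s in (0:ℝ)..X, G2 s := by
    rw [hg3]
    apply intervalIntegral.integral_congr
    intro s hs
    rw [uIcc_of_le hX] at hs
    exact hg2G s hs.1
  -- nonnegativity / monotonicity of G1
  have hG1mono : Monotone G1 := by
    intro u v huv
    simp only [hG1def]
    rw [← sub_nonneg, intervalIntegral.integral_interval_sub_left
      (hGc.intervalIntegrable 0 v) (hGc.intervalIntegrable 0 u)]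
    exact intervalIntegral.integral_nonneg huv (fun x _ => (hGpos x).le)
  have hG1zero : G1 0 = 0 := by simp [hG1def]
  have hG1nonneg : ∀ t, 0 ≤ t → 0 ≤ G1 t := fun t ht => hG1zero ▸ hG1mono ht
  have hG2nonneg : 0 ≤ G2 X :=
    intervalIntegral.integral_nonneg hX (fun x hx => hG1nonneg x hx.1)
  have hG3nonneg : 0 ≤ ∫ s in (0:ℝ)..X, G2 s := by
    apply intervalIntegral.integral_nonneg hX
    intro x hx
    exact intervalIntegral.integral_nonneg hx.1 (fun s hs => hG1nonneg s hs.1)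
  have hG1Y : 0 ≤ G1 Y := hG1nonneg Y hY
  -- key identity : ∫₀^X (X-ρ) G ρ = G2 X
  have hkey : (∫ ρ in (0:ℝ)..X, (X - ρ) * G ρ) = G2 X := by
    have hderiv : ∀ ρ ∈ uIcc (0:ℝ) X,
        HasDerivAt (fun u => (X - u) * G1 u + G2 u) ((X - ρ) * G ρ) ρ := by
      intro ρ _
      have h1 : HasDerivAt G1 (G ρ) ρ := (hGc.integral_hasStrictDerivAt 0 ρ).hasDerivAt
      have h2 : HasDerivAt G2 (G1 ρ) ρ := (hG1c.integral_hasStrictDerivAt 0 ρ).hasDerivAt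
      have h3 : HasDerivAt (fun u => X - u) (-1) ρ := by
        simpa using (hasDerivAt_id ρ).const_sub X
      have : HasDerivAt (fun u => (X - u) * G1 u + G2 u)
          (-1 * G1 ρ + (X - ρ) * G ρ + G1 ρ) ρ := (h3.mul h1).add h2
      convert this using 1
      ring
    have hint : IntervalIntegrable (fun ρ => (X - ρ) * G ρ) MeasureTheory.volume 0 X :=
      ((continuous_const.sub continuous_id).mul hGc).intervalIntegrable 0 X
    have := intervalIntegral.integral_eq_sub_of_hasDerivAt hderiv hint
    rw [this]
    simp [hG1zero, hG2def]
  -- pointwise bound on the integrand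
  have hbound : ∀ ρ ∈ Icc (0:ℝ) X,
      (X - ρ) * g ρ * (|Y - ρ| * g1 Y + g2 (min ρ Y))
        ≤ (X - ρ) * G ρ * (2 * (X + Y) * G1 Y) := by
    intro ρ hρ
    obtain ⟨hρ0, hρX⟩ := hρ
    have hgρ : g ρ = G ρ := by simp [hG, max_eq_left hρ0]
    have hm0 : 0 ≤ min ρ Y := le_min hρ0 hY
    rw [hgρ, hg1G Y hY, hg2G _ hm0]
    have hfac : (0:ℝ) ≤ (X - ρ) * G ρ :=
      mul_nonneg (by linarith) (hGpos ρ).le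
    apply mul_le_mul_of_nonneg_left _ hfac
    have habs : |Y - ρ| ≤ X + Y := by
      rw [abs_le]; constructor <;> linarith
    have hG2m : G2 (min ρ Y) ≤ ρ * G1 Y := by
      have h1 : G2 (min ρ Y) ≤ min ρ Y * G1 Y := by
        have : (∫ s in (0:ℝ)..(min ρ Y), G1 s) ≤ ∫ s in (0:ℝ)..(min ρ Y), G1 Y := by
          apply intervalIntegral.integral_mono_on hm0
            (hG1c.intervalIntegrable _ _) (intervalIntegrable_const)
          intro s hs
          exact hG1mono (le_trans hs.2 (min_le_right ρ Y))
        simpa using this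
      calc G2 (min ρ Y) ≤ min ρ Y * G1 Y := h1
        _ ≤ ρ * G1 Y := mul_le_mul_of_nonneg_right (min_le_left ρ Y) hG1Y
    calc |Y - ρ| * G1 Y + G2 (min ρ Y)
        ≤ (X + Y) * G1 Y + ρ * G1 Y :=
          add_le_add (mul_le_mul_of_nonneg_right habs hG1Y) hG2m
      _ ≤ (X + Y) * G1 Y + (X + Y) * G1 Y :=
          add_le_add le_rfl (mul_le_mul_of_nonneg_right (by linarith) hG1Y)
      _ = 2 * (X + Y) * G1 Y := by ring
  -- replace LHS by continuous version
  set F : ℝ → ℝ := fun ρ => (X - ρ) * G ρ * (|Y - ρ| * G1 Y + G2 (min ρ Y)) with hF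
  have hFc : Continuous F := by
    apply Continuous.mul
    · exact (continuous_const.sub continuous_id).mul hGc
    · exact ((continuous_const.sub continuous_id).abs.mul continuous_const).add
        (hG2c.comp (continuous_id.min continuous_const))
  have hcongr : (∫ ρ in (0:ℝ)..X, (X - ρ) * g ρ * (|Y - ρ| * g1 Y + g2 (min ρ Y)))
      = ∫ ρ in (0:ℝ)..X, F ρ := by
    apply intervalIntegral.integral_congr
    intro ρ hρ
    rw [uIcc_of_le hX] at hρ
    have hm0 : 0 ≤ min ρ Y := le_min hρ.1 hY
    simp only [hF, hG, max_eq_left hρ.1, hg1G Y hY, hg2G _ hm0]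
  rw [hcongr]
  have hmono : (∫ ρ in (0:ℝ)..X, F ρ)
      ≤ ∫ ρ in (0:ℝ)..X, (X - ρ) * G ρ * (2 * (X + Y) * G1 Y) := by
    apply intervalIntegral.integral_mono_on hX (hFc.intervalIntegrable 0 X)
      (((continuous_const.sub continuous_id).mul hGc).mul continuous_const
        |>.intervalIntegrable 0 X)
    intro ρ hρ
    have := hbound ρ hρ
    simp only [hF]
    calc F ρ = (X - ρ) * g ρ * (|Y - ρ| * g1 Y + g2 (min ρ Y)) := by
          simp only [hF, hG, max_eq_left hρ.1, hg1G Y hY, hg2G _ (le_min hρ.1 hY)]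
      _ ≤ _ := this
  have heq : (∫ ρ in (0:ℝ)..X, (X - ρ) * G ρ * (2 * (X + Y) * G1 Y))
      = G2 X * (2 * (X + Y) * G1 Y) := by
    rw [intervalIntegral.integral_mul_const, hkey]
  rw [hg2G X hX, hg1G Y hY, hg3G]
  nlinarith [mul_nonneg (mul_nonneg (add_nonneg hX hY) hG2nonneg) hG1Y,
    mul_nonneg hG3nonneg hG1Y, hmono, heq]
end
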